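/- arXiv:2302.13073 — 16 statements merged into one kernel-verified Lean document; each statement's English description precedes it below -/
import Mathlib

section
/- Let P > 0 and let p, q : [0,∞) → ℝ be continuous. Then the initial value problem g′(t) = −P·g(t)³ + (P/√2)·g(t)² + p(t)·g(t) + q(t)/√2 with g(0) = 1/√2 has a solution g that is continuously differentiable on all of [0,∞), and this solution is unique: any two continuously differentiable functions on [0,∞) satisfying the equation and the initial condition coincide. -/
open Set Metric Filter

private lemma ou_clamp_lip (M x y : ℝ) :
    |max (min x M) (-M) - max (min y M) (-M)| ≤ |x - y| :=
  (abs_max_sub_max_le_abs _ _ _).trans <| (abs_min_sub_min_le_max x M y M).trans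
    (by rw [sub_self, abs_zero, max_eq_left (abs_nonneg _)])

private lemma ou_cubic_lip (P B K x y px : ℝ) (hP : 0 ≤ P) (hK : 0 ≤ K) (hx : |x| ≤ K)
    (hy : |y| ≤ K) (hpx : |px| ≤ B) (c : ℝ) :
    |(-P * x^3 + (P/Real.sqrt 2) * x^2 + px * x + c) -
     (-P * y^3 + (P/Real.sqrt 2) * y^2 + px * y + c)|
      ≤ (3*P*K^2 + 2*(P/Real.sqrt 2)*K + B) * |x - y| := by
  have h2 : (0:ℝ) < Real.sqrt 2 := by positivity
  have hPs : 0 ≤ P / Real.sqrt 2 := by positivity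
  have h3 : |x^3 - y^3| ≤ 3*K^2 * |x-y| := by
    rw [show x^3 - y^3 = (x^2 + x*y + y^2) * (x - y) by ring, abs_mul]
    gcongr
    calc |x^2 + x*y + y^2| ≤ |x^2| + |x*y| + |y^2| :=
          (abs_add_le _ _).trans (by gcongr; exact abs_add_le _ _)
      _ ≤ 3*K^2 := by
          rw [abs_pow, abs_pow, abs_mul]; nlinarith [abs_nonneg x, abs_nonneg y]
  have h4 : |x^2 - y^2| ≤ 2*K * |x-y| := by
    rw [show x^2 - y^2 = (x + y) * (x - y) by ring, abs_mul]
    gcongr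
    calc |x + y| ≤ |x| + |y| := abs_add_le _ _
      _ ≤ 2*K := by linarith
  calc |(-P * x^3 + (P/Real.sqrt 2) * x^2 + px * x + c) -
     (-P * y^3 + (P/Real.sqrt 2) * y^2 + px * y + c)|
      = |(-P) * (x^3-y^3) + ((P/Real.sqrt 2) * (x^2-y^2) + px * (x-y))| := by ring_nf
    _ ≤ P * |x^3-y^3| + ((P/Real.sqrt 2) * |x^2-y^2| + B * |x-y|) := by
        refine (abs_add_le _ _).trans (add_le_add ?_ ((abs_add_le _ _).trans (add_le_add ?_ ?_))) <;>
          rw [abs_mul] <;> gcongr <;> simp [abs_of_nonneg, hP, hPs, abs_abs]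
    _ ≤ (3*P*K^2 + 2*(P/Real.sqrt 2)*K + B) * |x - y| := by nlinarith [abs_nonneg (x-y)]

/-- The vector field. -/
private noncomputable def ouV (P : ℝ) (p q : ℝ → ℝ) (t x : ℝ) : ℝ :=
  -P * x^3 + (P/Real.sqrt 2) * x^2 + p t * x + q t / Real.sqrt 2

/-- One-sided derivative from the Icc derivative. -/
private lemma ou_icc_to_ici {f : ℝ → ℝ} {d T t : ℝ} (ht : t ∈ Ico 0 T)
    (h : HasDerivWithinAt f d (Icc 0 T) t) : HasDerivWithinAt f d (Ici t) t := by
  refine h.mono_of_mem_nhdsWithin (Filter.mem_of_superset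
    (inter_mem_nhdsWithin (Ici t) (Iic_mem_nhds ht.2)) ?_)
  exact fun s hs => ⟨ht.1.trans hs.1, hs.2⟩

/-- Uniqueness of solutions on `[0, T]`. -/
private lemma ou_unique (P : ℝ) (hP : 0 ≤ P) (p q : ℝ → ℝ) (hp : Continuous p)
    (T : ℝ) (hT : 0 ≤ T) (f g : ℝ → ℝ)
    (hf : ContinuousOn f (Icc 0 T))
    (hf' : ∀ t ∈ Ico 0 T, HasDerivWithinAt f (ouV P p q t (f t)) (Ici t) t)
    (hg : ContinuousOn g (Icc 0 T))
    (hg' : ∀ t ∈ Ico 0 T, HasDerivWithinAt g (ouV P p q t (g t)) (Ici t) t)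
    (h0 : f 0 = g 0) : EqOn f g (Icc 0 T) := by
  obtain ⟨K, hK0, hKf, hKg⟩ : ∃ K : ℝ, 0 ≤ K ∧ (∀ t ∈ Icc 0 T, |f t| ≤ K) ∧
      (∀ t ∈ Icc 0 T, |g t| ≤ K) := by
    obtain ⟨Cf, hCf⟩ := (isCompact_Icc (a := (0:ℝ)) (b := T)).exists_bound_of_continuousOn hf
    obtain ⟨Cg, hCg⟩ := (isCompact_Icc (a := (0:ℝ)) (b := T)).exists_bound_of_continuousOn hg
    refine ⟨max Cf Cg, le_trans (abs_nonneg (f 0)) (le_trans (hCf 0 ⟨le_rfl, hT⟩)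
      (le_max_left _ _)), fun t ht => (hCf t ht).trans (le_max_left _ _),
      fun t ht => (hCg t ht).trans (le_max_right _ _)⟩
  obtain ⟨B, hBp⟩ : ∃ B : ℝ, ∀ t ∈ Icc 0 T, |p t| ≤ B :=
    (isCompact_Icc (a := (0:ℝ)) (b := T)).exists_bound_of_continuousOn hp.continuousOn
  obtain ⟨L₀, hL₀0, hLip⟩ : ∃ L₀ : ℝ, 0 ≤ L₀ ∧ ∀ t ∈ Icc 0 T, ∀ x, |x| ≤ K → ∀ y, |y| ≤ K →
      |ouV P p q t x - ouV P p q t y| ≤ L₀ * |x - y| := by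
    refine ⟨3*P*K^2 + 2*(P/Real.sqrt 2)*K + max B 0, by positivity, fun t ht x hx y hy => ?_⟩
    exact ou_cubic_lip P (max B 0) K x y (p t) hP hK0 hx hy
      ((hBp t ht).trans (le_max_left _ _)) _
  have hv : ∀ t : ℝ, LipschitzOnWith L₀.toNNReal (ouV P p q t)
      ((fun t => if t ∈ Icc 0 T then closedBall (0:ℝ) K else (∅ : Set ℝ)) t) := by
    intro t
    by_cases htI : t ∈ Icc 0 T
    · simp only [if_pos htI]
      rw [lipschitzOnWith_iff_dist_le_mul]
      intro x hx y hy
      rw [Real.dist_eq, Real.dist_eq, Real.coe_toNNReal _ hL₀0]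
      exact hLip t htI x (by simpa [Real.norm_eq_abs] using mem_closedBall_zero_iff.mp hx) y
        (by simpa [Real.norm_eq_abs] using mem_closedBall_zero_iff.mp hy)
    · simp only [if_neg htI]
      exact lipschitzOnWith_empty _ _
  have hfs : ∀ t ∈ Ico 0 T, f t ∈
      (fun t => if t ∈ Icc 0 T then closedBall (0:ℝ) K else (∅ : Set ℝ)) t := by
    intro t ht
    simp only [if_pos (Ico_subset_Icc_self ht)]
    rw [mem_closedBall_zero_iff, Real.norm_eq_abs]
    exact hKf t (Ico_subset_Icc_self ht)
  have hgs : ∀ t ∈ Ico 0 T, g t ∈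
      (fun t => if t ∈ Icc 0 T then closedBall (0:ℝ) K else (∅ : Set ℝ)) t := by
    intro t ht
    simp only [if_pos (Ico_subset_Icc_self ht)]
    rw [mem_closedBall_zero_iff, Real.norm_eq_abs]
    exact hKg t (Ico_subset_Icc_self ht)
  exact ODE_solution_unique_of_mem_Icc_right (fun t _ => hv t) hf hf' hfs hg hg' hgs h0

/-- Existence of a solution on `[0, T]`. -/
private lemma ou_exists (P : ℝ) (hP : 0 < P) (p q : ℝ → ℝ) (hp : Continuous p)
    (hq : Continuous q) (T : ℝ) (hT : 0 ≤ T) :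
    ∃ f : ℝ → ℝ, f 0 = 1 / Real.sqrt 2 ∧
      ∀ t ∈ Icc 0 T, HasDerivWithinAt f (ouV P p q t (f t)) (Icc 0 T) t := by
  have h2 : (0:ℝ) < Real.sqrt 2 := by positivity
  obtain ⟨B, hB0, hBp', hBq'⟩ : ∃ B : ℝ, 0 ≤ B ∧ (∀ t ∈ Icc 0 T, |p t| ≤ B) ∧
      (∀ t ∈ Icc 0 T, |q t| ≤ B) := by
    obtain ⟨Bp, hBp⟩ := (isCompact_Icc (a := (0:ℝ)) (b := T)).exists_bound_of_continuousOn
      hp.continuousOn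
    obtain ⟨Bq, hBq⟩ := (isCompact_Icc (a := (0:ℝ)) (b := T)).exists_bound_of_continuousOn
      hq.continuousOn
    exact ⟨max (max Bp Bq) 0, le_max_right _ _,
      fun t ht => (hBp t ht).trans ((le_max_left _ _).trans (le_max_left _ _)),
      fun t ht => (hBq t ht).trans ((le_max_right _ _).trans (le_max_left _ _))⟩
  obtain ⟨M, hM1, hMx, hMkey⟩ : ∃ M : ℝ, 1 ≤ M ∧ 1/Real.sqrt 2 ≤ M ∧
      P/Real.sqrt 2 + B + B/Real.sqrt 2 < P*M := by
    refine ⟨max (1/Real.sqrt 2 + 1) ((P/Real.sqrt 2 + B + B/Real.sqrt 2)/P + 1), ?_, ?_, ?_⟩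
    · refine le_trans ?_ (le_max_left _ _)
      have : (0:ℝ) ≤ 1/Real.sqrt 2 := by positivity
      linarith
    · exact le_trans (by linarith) (le_max_left _ _)
    · have h1 : (P/Real.sqrt 2 + B + B/Real.sqrt 2)/P + 1 ≤ _ := le_max_right
        (1/Real.sqrt 2 + 1) ((P/Real.sqrt 2 + B + B/Real.sqrt 2)/P + 1)
      have h2' : (P/Real.sqrt 2 + B + B/Real.sqrt 2)/P <
          max (1/Real.sqrt 2 + 1) ((P/Real.sqrt 2 + B + B/Real.sqrt 2)/P + 1) := by linarith
      have h3 := (div_lt_iff₀ hP).mp h2'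
      nlinarith [h3]
  have hM0 : (0:ℝ) ≤ M := by linarith
  have hM2 : (1:ℝ) ≤ M^2 := by nlinarith
  have hMM : M ≤ M^2 := by nlinarith
  -- sign conditions at the boundary
  have hsignU : ∀ t ∈ Icc 0 T, ouV P p q t M < 0 := by
    intro t ht
    have h1 : p t * M ≤ B * M :=
      mul_le_mul_of_nonneg_right (abs_le.mp (hBp' t ht)).2 hM0
    have h2' : q t / Real.sqrt 2 ≤ B / Real.sqrt 2 := by
      gcongr
      exact (abs_le.mp (hBq' t ht)).2
    have key : (P/Real.sqrt 2 + B + B/Real.sqrt 2) * M^2 < P*M*M^2 :=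
      mul_lt_mul_of_pos_right hMkey (by positivity)
    have hBM : B*M ≤ B*M^2 := mul_le_mul_of_nonneg_left hMM hB0
    have hBs : B/Real.sqrt 2 ≤ (B/Real.sqrt 2)*M^2 := by
      have h : (0:ℝ) ≤ B/Real.sqrt 2 := by positivity
      nlinarith [mul_le_mul_of_nonneg_left hM2 h]
    simp only [ouV]
    nlinarith
  have hsignL : ∀ t ∈ Icc 0 T, 0 < ouV P p q t (-M) := by
    intro t ht
    have h1 : -(B * M) ≤ p t * (-M) := by
      have := (abs_le.mp (hBp' t ht)).2
      nlinarith [mul_le_mul_of_nonneg_right this hM0]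
    have h2' : -(B / Real.sqrt 2) ≤ q t / Real.sqrt 2 := by
      rw [show -(B/Real.sqrt 2) = (-B)/Real.sqrt 2 by ring]
      gcongr
      exact (abs_le.mp (hBq' t ht)).1
    have key : (P/Real.sqrt 2 + B + B/Real.sqrt 2) * M^2 < P*M*M^2 :=
      mul_lt_mul_of_pos_right hMkey (by positivity)
    have hBM : B*M ≤ B*M^2 := mul_le_mul_of_nonneg_left hMM hB0
    have hBs : B/Real.sqrt 2 ≤ (B/Real.sqrt 2)*M^2 := by
      have h : (0:ℝ) ≤ B/Real.sqrt 2 := by positivity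
      nlinarith [mul_le_mul_of_nonneg_left hM2 h]
    have hPsM : 0 ≤ (P/Real.sqrt 2) * M^2 := by positivity
    have hPsM2 : (P/Real.sqrt 2) * M^2 ≤ (P/Real.sqrt 2) * M^2 := le_rfl
    simp only [ouV]
    nlinarith [sq_nonneg M]
  -- the truncated field
  have hprojle : ∀ x : ℝ, |max (min x M) (-M)| ≤ M := fun x =>
    abs_le.mpr ⟨le_max_right _ _, max_le (min_le_right _ _) (by linarith)⟩
  have hprojeq : ∀ x : ℝ, |x| ≤ M → max (min x M) (-M) = x := by
    intro x hx
    rw [abs_le] at hx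
    rw [min_eq_left hx.2, max_eq_left hx.1]
  obtain ⟨f, hf0, hfd⟩ : ∃ f : ℝ → ℝ, f 0 = 1/Real.sqrt 2 ∧ ∀ t ∈ Icc 0 T,
      HasDerivWithinAt f (ouV P p q t (max (min (f t) M) (-M))) (Icc 0 T) t := by
    obtain ⟨C, hC0, hwbound⟩ : ∃ C : ℝ, 0 ≤ C ∧ ∀ t ∈ Icc 0 T, ∀ x : ℝ,
        |ouV P p q t (max (min x M) (-M))| ≤ C := by
      refine ⟨P*M^3 + (P/Real.sqrt 2)*M^2 + B*M + B/Real.sqrt 2, by positivity, ?_⟩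
      intro t ht x
      have hz := hprojle x
      set z := max (min x M) (-M) with hz'
      have e1 : |(-P) * z^3| ≤ P * M^3 := by
        rw [abs_mul, abs_neg, abs_of_nonneg hP.le, abs_pow]
        gcongr
        try exact hz
      have e2 : |(P/Real.sqrt 2) * z^2| ≤ (P/Real.sqrt 2) * M^2 := by
        rw [abs_mul, abs_of_nonneg (by positivity : (0:ℝ) ≤ P/Real.sqrt 2), abs_pow]
        gcongr
        try exact hz
      have e3 : |p t * z| ≤ B * M := by
        rw [abs_mul]
        exact mul_le_mul (hBp' t ht) hz (abs_nonneg _) hB0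
      have e4 : |q t / Real.sqrt 2| ≤ B / Real.sqrt 2 := by
        rw [abs_div, abs_of_nonneg h2.le]
        gcongr
        exact hBq' t ht
      calc |ouV P p q t z|
          = |(-P) * z^3 + ((P/Real.sqrt 2) * z^2 + (p t * z + q t / Real.sqrt 2))| := by
            simp only [ouV]; ring_nf
        _ ≤ |(-P) * z^3| + (|(P/Real.sqrt 2) * z^2| + (|p t * z| + |q t / Real.sqrt 2|)) := by
            refine (abs_add_le _ _).trans ?_
            gcongr
            refine (abs_add_le _ _).trans ?_
            gcongr
            exact abs_add_le _ _
        _ ≤ P*M^3 + (P/Real.sqrt 2)*M^2 + B*M + B/Real.sqrt 2 := by linarith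
    obtain ⟨L₀, hL₀0, hLip⟩ : ∃ L₀ : ℝ, 0 ≤ L₀ ∧ ∀ t ∈ Icc 0 T, ∀ x y : ℝ,
        |ouV P p q t (max (min x M) (-M)) - ouV P p q t (max (min y M) (-M))| ≤ L₀ * |x - y| := by
      refine ⟨3*P*M^2 + 2*(P/Real.sqrt 2)*M + B, by positivity, fun t ht x y => ?_⟩
      calc |ouV P p q t (max (min x M) (-M)) - ouV P p q t (max (min y M) (-M))|
          ≤ (3*P*M^2 + 2*(P/Real.sqrt 2)*M + B) * |max (min x M) (-M) - max (min y M) (-M)| :=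
            ou_cubic_lip P B M _ _ (p t) hP.le hM0 (hprojle x) (hprojle y) (hBp' t ht) _
        _ ≤ (3*P*M^2 + 2*(P/Real.sqrt 2)*M + B) * |x - y| :=
            mul_le_mul_of_nonneg_left (ou_clamp_lip M x y) (by positivity)
    have hpl : IsPicardLindelof (fun t x => ouV P p q t (max (min x M) (-M)))
        (tmin := 0) (tmax := T) ⟨0, ⟨le_rfl, hT⟩⟩
        (1/Real.sqrt 2) (C*T+1).toNNReal 0 C.toNNReal L₀.toNNReal := by
      constructor
      · intro t ht
        apply LipschitzWith.lipschitzOnWith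
        rw [lipschitzWith_iff_dist_le_mul]
        intro x y
        rw [Real.dist_eq, Real.dist_eq, Real.coe_toNNReal _ hL₀0]
        exact hLip t ht x y
      · intro x _
        apply Continuous.continuousOn
        simp only [ouV]
        fun_prop
      · intro t ht x _
        rw [Real.norm_eq_abs, Real.coe_toNNReal _ hC0]
        exact hwbound t ht x
      · show (C.toNNReal : ℝ) * max (T - 0) (0 - 0) ≤ ((C*T+1).toNNReal : ℝ) - ((0:NNReal):ℝ)
        rw [Real.coe_toNNReal _ hC0, Real.coe_toNNReal _ (by positivity), NNReal.coe_zero,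
          sub_zero, sub_zero, sub_zero, max_eq_left hT]
        linarith
    exact hpl.exists_eq_forall_mem_Icc_hasDerivWithinAt₀
  have hfc : ContinuousOn f (Icc 0 T) := fun t ht => (hfd t ht).continuousWithinAt
  -- invariance: f stays in [-M, M]
  have hub : ∀ t ∈ Icc 0 T, f t ≤ M := by
    intro t ht
    refine image_le_of_deriv_right_lt_deriv_boundary
      (f' := fun t => ouV P p q t (max (min (f t) M) (-M))) (B := fun _ => M)
      (B' := fun _ => 0) hfc (fun x hx => ou_icc_to_ici hx (hfd x (Ico_subset_Icc_self hx)))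
      (by rw [hf0]; exact hMx) (fun x => hasDerivAt_const x M) ?_ ht
    intro x hx hfx
    show ouV P p q x (min (f x) M ⊔ -M) < 0
    rw [show f x = M from hfx, hprojeq M (by rw [abs_of_nonneg hM0])]
    exact hsignU x (Ico_subset_Icc_self hx)
  have hlb : ∀ t ∈ Icc 0 T, -M ≤ f t := by
    intro t ht
    have key : (fun s => -f s) t ≤ M := by
      refine image_le_of_deriv_right_lt_deriv_boundary
        (f' := fun t => -(ouV P p q t (max (min (f t) M) (-M)))) (B := fun _ => M)
        (B' := fun _ => 0) hfc.neg
        (fun x hx => (ou_icc_to_ici hx (hfd x (Ico_subset_Icc_self hx))).neg)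
        (by show -f 0 ≤ M
            rw [hf0]
            have : (0:ℝ) ≤ 1/Real.sqrt 2 := by positivity
            linarith) (fun x => hasDerivAt_const x M) ?_ ht
      intro x hx hfx
      have hfx' : f x = -M := by
        have h : -f x = M := hfx
        linarith
      show -(ouV P p q x (min (f x) M ⊔ -M)) < 0
      rw [hfx', hprojeq (-M) (by rw [abs_neg, abs_of_nonneg hM0])]
      simp only [neg_lt_zero]
      exact hsignL x (Ico_subset_Icc_self hx)
    have h : -f t ≤ M := key
    linarith
  refine ⟨f, hf0, fun t ht => ?_⟩
  have heq : max (min (f t) M) (-M) = f t := hprojeq (f t) (abs_le.mpr ⟨hlb t ht, hub t ht⟩)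
  have := hfd t ht
  rwa [heq] at this

/-- For P > 0 and continuous p, q on [0,∞), the IVP
g′(t) = −P·g(t)³ + (P/√2)·g(t)² + p(t)·g(t) + q(t)/√2, g(0) = 1/√2,
has a continuously differentiable solution on all of [0,∞), and this solution
is unique among continuously differentiable solutions on [0,∞). -/
theorem ou_acgn_ode_exists_unique (P : ℝ) (hP : 0 < P) (p q : ℝ → ℝ)
    (hp : ContinuousOn p (Set.Ici (0:ℝ))) (hq : ContinuousOn q (Set.Ici (0:ℝ))) :
    (∃ g : ℝ → ℝ, ContDiffOn ℝ 1 g (Set.Ici (0:ℝ)) ∧ g 0 = 1 / Real.sqrt 2 ∧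
      ∀ t ∈ Set.Ici (0:ℝ), derivWithin g (Set.Ici (0:ℝ)) t =
        -P * g t ^ 3 + (P / Real.sqrt 2) * g t ^ 2 + p t * g t + q t / Real.sqrt 2) ∧
    (∀ g₁ g₂ : ℝ → ℝ,
      ContDiffOn ℝ 1 g₁ (Set.Ici (0:ℝ)) → g₁ 0 = 1 / Real.sqrt 2 →
      (∀ t ∈ Set.Ici (0:ℝ), derivWithin g₁ (Set.Ici (0:ℝ)) t =
        -P * g₁ t ^ 3 + (P / Real.sqrt 2) * g₁ t ^ 2 + p t * g₁ t + q t / Real.sqrt 2) →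
      ContDiffOn ℝ 1 g₂ (Set.Ici (0:ℝ)) → g₂ 0 = 1 / Real.sqrt 2 →
      (∀ t ∈ Set.Ici (0:ℝ), derivWithin g₂ (Set.Ici (0:ℝ)) t =
        -P * g₂ t ^ 3 + (P / Real.sqrt 2) * g₂ t ^ 2 + p t * g₂ t + q t / Real.sqrt 2) →
      ∀ t ∈ Set.Ici (0:ℝ), g₁ t = g₂ t) := by
  obtain ⟨p', hp'c, hp'eq⟩ : ∃ p' : ℝ → ℝ, Continuous p' ∧ ∀ t : ℝ, 0 ≤ t → p' t = p t :=
    ⟨fun t => p (max t 0), hp.comp_continuous (continuous_id.max continuous_const)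
      (fun t => mem_Ici.mpr (le_max_right _ _)), fun t ht => by simp [max_eq_left ht]⟩
  obtain ⟨q', hq'c, hq'eq⟩ : ∃ q' : ℝ → ℝ, Continuous q' ∧ ∀ t : ℝ, 0 ≤ t → q' t = q t :=
    ⟨fun t => q (max t 0), hq.comp_continuous (continuous_id.max continuous_const)
      (fun t => mem_Ici.mpr (le_max_right _ _)), fun t ht => by simp [max_eq_left ht]⟩
  choose sol hsol0 hsolD using fun n : ℕ => ou_exists P hP p' q' hp'c hq'c n (Nat.cast_nonneg n)
  -- the glued solutions agree
  have agree : ∀ (m n : ℕ) (t : ℝ), t ∈ Icc 0 (min (m:ℝ) n) → sol m t = sol n t := by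
    intro m n t ht
    have hmin0 : (0:ℝ) ≤ min (m:ℝ) n := le_min (Nat.cast_nonneg m) (Nat.cast_nonneg n)
    refine ou_unique P hP.le p' q' hp'c (min (m:ℝ) n) hmin0 (sol m) (sol n) ?_ ?_ ?_ ?_
      (by rw [hsol0 m, hsol0 n]) ht
    · exact fun s hs => ((hsolD m s ⟨hs.1, hs.2.trans (min_le_left _ _)⟩).continuousWithinAt).mono
        (Icc_subset_Icc_right (min_le_left _ _))
    · exact fun s hs => ou_icc_to_ici ⟨hs.1, hs.2.trans_le (min_le_left _ _)⟩
        (hsolD m s ⟨hs.1, (hs.2.trans_le (min_le_left _ _)).le⟩)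
    · exact fun s hs => ((hsolD n s ⟨hs.1, hs.2.trans (min_le_right _ _)⟩).continuousWithinAt).mono
        (Icc_subset_Icc_right (min_le_right _ _))
    · exact fun s hs => ou_icc_to_ici ⟨hs.1, hs.2.trans_le (min_le_right _ _)⟩
        (hsolD n s ⟨hs.1, (hs.2.trans_le (min_le_right _ _)).le⟩)
  have gkey : ∀ (n : ℕ) (t : ℝ), t ∈ Icc (0:ℝ) n → sol (⌊t⌋₊ + 1) t = sol n t := by
    intro n t ht
    refine agree _ n t ⟨ht.1, le_min ?_ ht.2⟩
    push_cast
    linarith [Nat.lt_floor_add_one t]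
  -- derivative of the glued function
  have gder : ∀ t : ℝ, 0 ≤ t → HasDerivWithinAt (fun s => sol (⌊s⌋₊ + 1) s)
      (ouV P p' q' t (sol (⌊t⌋₊ + 1) t)) (Ici 0) t := by
    intro t ht
    have htn : t < ((⌊t⌋₊ + 1 : ℕ) : ℝ) := by push_cast; exact Nat.lt_floor_add_one t
    have htI : t ∈ Icc (0:ℝ) ((⌊t⌋₊ + 1 : ℕ) : ℝ) := ⟨ht, htn.le⟩
    have h1 := hsolD (⌊t⌋₊ + 1) t htI
    have h2 : HasDerivWithinAt (fun s => sol (⌊s⌋₊ + 1) s)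
        (ouV P p' q' t (sol (⌊t⌋₊ + 1) t)) (Icc 0 ((⌊t⌋₊ + 1 : ℕ) : ℝ)) t :=
      h1.congr (fun s hs => gkey (⌊t⌋₊ + 1) s hs) (gkey _ t htI)
    exact h2.mono_of_mem_nhdsWithin (Filter.mem_of_superset
      (inter_mem_nhdsWithin (Ici 0) (Iic_mem_nhds htn)) (fun s hs => ⟨hs.1, hs.2⟩))
  have gdiff : DifferentiableOn ℝ (fun s => sol (⌊s⌋₊ + 1) s) (Ici 0) :=
    fun t ht => (gder t ht).differentiableWithinAt
  have gcont : ContinuousOn (fun s => sol (⌊s⌋₊ + 1) s) (Ici 0) := gdiff.continuousOn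
  have gderiv : ∀ t ∈ Ici (0:ℝ), derivWithin (fun s => sol (⌊s⌋₊ + 1) s) (Ici 0) t =
      ouV P p' q' t (sol (⌊t⌋₊ + 1) t) :=
    fun t ht => (gder t ht).derivWithin (uniqueDiffOn_Ici 0 t ht)
  constructor
  · refine ⟨fun s => sol (⌊s⌋₊ + 1) s, ?_, hsol0 _, fun t ht => ?_⟩
    · have hcont2 : ContinuousOn (fun t => ouV P p' q' t (sol (⌊t⌋₊ + 1) t)) (Ici 0) := by
        simp only [ouV]
        exact (((continuousOn_const.mul (gcont.pow 3)).add
          (continuousOn_const.mul (gcont.pow 2))).add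
          ((hp'c.continuousOn).mul gcont)).add ((hq'c.continuousOn).div_const _)
      have h := (contDiffOn_succ_iff_derivWithin (n := 0) (uniqueDiffOn_Ici (0:ℝ))).mpr
        ⟨gdiff, by simp, by rw [contDiffOn_zero]; exact hcont2.congr gderiv⟩
      simpa using h
    · rw [gderiv t ht]
      simp only [ouV, hp'eq t ht, hq'eq t ht]
  · intro g₁ g₂ hc1 h01 hd1 hc2 h02 hd2 t ht
    have mkD : ∀ (g : ℝ → ℝ), ContDiffOn ℝ 1 g (Ici 0) →
        (∀ s ∈ Ici (0:ℝ), derivWithin g (Ici 0) s =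
          -P * g s ^ 3 + (P / Real.sqrt 2) * g s ^ 2 + p s * g s + q s / Real.sqrt 2) →
        ∀ s ∈ Ico (0:ℝ) t, HasDerivWithinAt g (ouV P p' q' s (g s)) (Ici s) s := by
      intro g hc hd s hs
      have hD : HasDerivWithinAt g (derivWithin g (Ici 0) s) (Ici 0) s :=
        ((hc.differentiableOn one_ne_zero) s hs.1).hasDerivWithinAt
      rw [hd s hs.1] at hD
      have hD' : HasDerivWithinAt g (ouV P p' q' s (g s)) (Ici 0) s := by
        simp only [ouV, hp'eq s hs.1, hq'eq s hs.1]
        exact hD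
      exact hD'.mono (Ici_subset_Ici.mpr hs.1)
    have key := ou_unique P hP.le p' q' hp'c t ht g₁ g₂
      (hc1.continuousOn.mono Icc_subset_Ici_self) (mkD g₁ hc1 hd1)
      (hc2.continuousOn.mono Icc_subset_Ici_self) (mkD g₂ hc2 hd2)
      (h01.trans h02.symm)
    exact key ⟨ht, le_rfl⟩
end

section
/- Let P > 0 and let p, q : [0,∞) → ℝ be continuous with lim_{t→∞} p(t) = p∞ and lim_{t→∞} q(t) = q∞ for real constants p∞, q∞. If g is the (unique, globally defined) continuously differentiable solution of g′(t) = −P·g(t)³ + (P/√2)·g(t)² + p(t)·g(t) + q(t)/√2 with g(0) = 1/√2, then lim_{t→∞} g(t) exists, and its value r satisfies −P·r³ + (P/√2)·r² + p∞·r + q∞/√2 = 0, i.e., r is a real root of the limiting cubic. -/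
open Set Filter Topology

lemma stayAbove (g : ℝ → ℝ) (hgc : ContinuousOn g (Set.Ici 0))
    (hdiff : DifferentiableOn ℝ g (Set.Ici 0))
    (c T t₁ : ℝ) (hT : 0 ≤ T)
    (hpos : ∀ t, T ≤ t → g t = c → 0 < derivWithin g (Set.Ici 0) t)
    (ht₁ : T ≤ t₁) (hgt : c < g t₁) : ∀ t, t₁ ≤ t → c < g t := by
  intro t₂ ht₂
  by_contra hle
  push_neg at hle
  set S : Set ℝ := Icc t₁ t₂ ∩ g ⁻¹' (Iic c) with hS
  have h01 : (0:ℝ) ≤ t₁ := hT.trans ht₁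
  have hIcc : Icc t₁ t₂ ⊆ Ici (0:ℝ) := fun x hx => le_trans h01 hx.1
  have hScl : IsClosed S :=
    (hgc.mono hIcc).preimage_isClosed_of_isClosed isClosed_Icc isClosed_Iic
  have hSne : S.Nonempty := ⟨t₂, ⟨ht₂, le_rfl⟩, hle⟩
  have hSbd : BddBelow S := ⟨t₁, fun x hx => hx.1.1⟩
  have hsS : sInf S ∈ S := hScl.csInf_mem hSne hSbd
  generalize hsdef : sInf S = s at *
  have hgsle : g s ≤ c := hsS.2
  have hst₁ : t₁ ≤ s := hsS.1.1
  have hlt : t₁ < s := lt_of_le_of_ne hst₁ (fun h => absurd (h ▸ hgsle) (not_le.2 hgt))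
  have hbefore : ∀ x ∈ Ico t₁ s, c < g x := by
    intro x hx
    by_contra h
    push_neg at h
    have hxS : x ∈ S := ⟨⟨hx.1, le_trans hx.2.le hsS.1.2⟩, h⟩
    exact absurd (hsdef ▸ csInf_le hSbd hxS) (not_le.2 hx.2)
  have hgs : g s = c := by
    rcases eq_or_lt_of_le hgsle with h | h
    · exact h
    have hmem : c ∈ Icc (g s) (g t₁) := ⟨h.le, hgt.le⟩
    obtain ⟨u, hu, hgu⟩ := intermediate_value_Icc' hst₁
      (hgc.mono (fun x hx => le_trans h01 hx.1)) hmem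
    have huS : u ∈ S := ⟨⟨hu.1, le_trans hu.2 hsS.1.2⟩, hgu.le⟩
    have : s ≤ u := hsdef ▸ csInf_le hSbd huS
    have : u = s := le_antisymm hu.2 this
    rw [this] at hgu
    exact absurd hgu.symm (ne_of_lt h).symm
  have hs0 : (0:ℝ) ≤ s := le_trans h01 hst₁
  have hd : 0 < derivWithin g (Set.Ici 0) s := hpos s (le_trans ht₁ hst₁) hgs
  have hder : HasDerivWithinAt g (derivWithin g (Set.Ici 0) s) (Set.Ici 0) s :=
    (hdiff s hs0).hasDerivWithinAt
  have hder2 : HasDerivWithinAt g (derivWithin g (Set.Ici 0) s) (Icc t₁ s) s :=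
    hder.mono (fun x hx => le_trans h01 hx.1)
  rw [hasDerivWithinAt_iff_tendsto_slope] at hder2
  have hset : Icc t₁ s \ {s} = Ico t₁ s := Icc_sdiff_right
  have hne : (𝓝[Icc t₁ s \ {s}] s).NeBot := by
    rw [hset]
    refine mem_closure_iff_nhdsWithin_neBot.mp ?_
    rw [closure_Ico hlt.ne]
    exact ⟨hst₁, le_rfl⟩
  have hslope : ∀ᶠ x in 𝓝[Icc t₁ s \ {s}] s, slope g s x ≤ 0 := by
    filter_upwards [self_mem_nhdsWithin] with x hx
    rw [hset] at hx
    have h1 : 0 < g x - g s := by rw [hgs]; linarith [hbefore x hx]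
    have h2 : x - s < 0 := sub_neg.2 hx.2
    rw [slope_def_field]
    exact (div_neg_of_pos_of_neg h1 h2).le
  exact absurd (le_of_tendsto hder2 hslope) (not_le.2 hd)

lemma stayBelow (g : ℝ → ℝ) (hgc : ContinuousOn g (Set.Ici 0))
    (hdiff : DifferentiableOn ℝ g (Set.Ici 0))
    (c T t₁ : ℝ) (hT : 0 ≤ T)
    (hneg : ∀ t, T ≤ t → g t = c → derivWithin g (Set.Ici 0) t < 0)
    (ht₁ : T ≤ t₁) (hgt : g t₁ < c) : ∀ t, t₁ ≤ t → g t < c := by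
  have key : ∀ t, T ≤ t → (fun x => -g x) t = -c →
      0 < derivWithin (fun x => -g x) (Set.Ici 0) t := by
    intro t ht hgt'
    have hgtc : g t = c := by
      have : -g t = -c := hgt'
      linarith
    have hud : UniqueDiffWithinAt ℝ (Set.Ici (0:ℝ)) t := uniqueDiffOn_Ici 0 t (le_trans hT ht)
    rw [derivWithin.fun_neg]
    simpa using hneg t ht hgtc
  have h := stayAbove (fun x => -g x) hgc.neg hdiff.neg (-c) T t₁ hT key ht₁
    (by simpa using hgt)
  intro t ht
  have := h t ht
  simpa using this

lemma bddAux (p : ℝ → ℝ) (pinf : ℝ) (hp : ContinuousOn p (Set.Ici 0))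
    (hpl : Tendsto p atTop (𝓝 pinf)) : ∃ C : ℝ, 0 ≤ C ∧ ∀ t, 0 ≤ t → |p t| ≤ C := by
  have h1 : ∀ᶠ t in atTop, |p t| < |pinf| + 1 :=
    hpl.abs.eventually (Iio_mem_nhds (lt_add_one _))
  obtain ⟨T, hT⟩ := eventually_atTop.1 h1
  obtain ⟨C, hC⟩ := (isCompact_Icc (a := (0:ℝ)) (b := max T 0)).exists_bound_of_continuousOn
    (hp.mono (fun x hx => hx.1))
  refine ⟨max (max C (|pinf| + 1)) 0, le_max_right _ _, fun t ht => ?_⟩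
  rcases le_total t (max T 0) with h | h
  · exact le_max_of_le_left (le_max_of_le_left (by simpa using hC t ⟨ht, h⟩))
  · exact le_max_of_le_left (le_max_of_le_right (hT t (le_trans (le_max_left _ _) h)).le)

lemma keyU' (P M s Cp Cq a b : ℝ) (hP : 0 < P) (hs0 : 0 < s) (hs1 : 1 < s)
    (hM1 : 1 ≤ M) (hMK : P + Cp + Cq + 1 ≤ P * M) (hCp0 : 0 ≤ Cp) (hCq0 : 0 ≤ Cq)
    (ha : |a| ≤ Cp) (hb : |b| ≤ Cq) :
    -P * M ^ 3 + (P / s) * M ^ 2 + a * M + b / s < 0 := by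
  have hpt := abs_le.1 ha
  have hqt := abs_le.1 hb
  have hM2 : 1 ≤ M ^ 2 := by nlinarith
  have hPs : P / s ≤ P := div_le_self hP.le hs1.le
  have hqs : b / s ≤ Cq := by
    rw [div_le_iff₀ hs0]; nlinarith
  have A : 0 ≤ M ^ 2 * (P * M - (P + Cp + Cq + 1)) :=
    mul_nonneg (sq_nonneg M) (by linarith)
  have B : 0 ≤ (Cp - a) * M := mul_nonneg (by linarith) (by linarith)
  have C : 0 ≤ Cp * (M ^ 2 - M) := mul_nonneg hCp0 (by nlinarith)
  have D : 0 ≤ Cq * (M ^ 2 - 1) := mul_nonneg hCq0 (by nlinarith)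
  have E : 0 ≤ (P - P / s) * M ^ 2 := mul_nonneg (by linarith) (sq_nonneg M)
  linarith [A, B, C, D, E, hqs, hM2]

lemma keyL' (P M s Cp Cq a b : ℝ) (hP : 0 < P) (hs0 : 0 < s) (hs1 : 1 < s)
    (hM1 : 1 ≤ M) (hMK : P + Cp + Cq + 1 ≤ P * M) (hCp0 : 0 ≤ Cp) (hCq0 : 0 ≤ Cq)
    (ha : |a| ≤ Cp) (hb : |b| ≤ Cq) :
    0 < -P * (-M) ^ 3 + (P / s) * (-M) ^ 2 + a * (-M) + b / s := by
  have hpt := abs_le.1 ha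
  have hqt := abs_le.1 hb
  have hM2 : 1 ≤ M ^ 2 := by nlinarith
  have hqs : -Cq ≤ b / s := by
    rw [le_div_iff₀ hs0]; nlinarith
  have A : 0 ≤ M ^ 2 * (P * M - (P + Cp + Cq + 1)) :=
    mul_nonneg (sq_nonneg M) (by linarith)
  have B : 0 ≤ (Cp - a) * M := mul_nonneg (by linarith) (by linarith)
  have C : 0 ≤ Cp * (M ^ 2 - M) := mul_nonneg hCp0 (by nlinarith)
  have D : 0 ≤ Cq * (M ^ 2 - 1) := mul_nonneg hCq0 (by nlinarith)
  have E : 0 ≤ (P / s) * M ^ 2 := mul_nonneg (div_nonneg hP.le hs0.le) (sq_nonneg M)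
  have F : 0 ≤ P * M ^ 2 := mul_nonneg hP.le (sq_nonneg M)
  linarith [A, B, C, D, E, F, hqs, hM2]

/-- If in addition p(t) → p∞ and q(t) → q∞ as t → ∞, then the
solution g of the IVP converges as t → ∞, and its limit is a real root of the
limiting cubic −P·y³ + (P/√2)·y² + p∞·y + q∞/√2. -/
theorem ou_acgn_ode_limit_is_root (P : ℝ) (hP : 0 < P) (p q : ℝ → ℝ) (pinf qinf : ℝ)
    (hp : ContinuousOn p (Set.Ici (0:ℝ))) (hq : ContinuousOn q (Set.Ici (0:ℝ)))
    (hpl : Filter.Tendsto p Filter.atTop (nhds pinf))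
    (hql : Filter.Tendsto q Filter.atTop (nhds qinf))
    (g : ℝ → ℝ) (hg : ContDiffOn ℝ 1 g (Set.Ici (0:ℝ))) (hg0 : g 0 = 1 / Real.sqrt 2)
    (hode : ∀ t ∈ Set.Ici (0:ℝ), derivWithin g (Set.Ici (0:ℝ)) t =
      -P * g t ^ 3 + (P / Real.sqrt 2) * g t ^ 2 + p t * g t + q t / Real.sqrt 2) :
    ∃ r : ℝ, Filter.Tendsto g Filter.atTop (nhds r) ∧
      -P * r ^ 3 + (P / Real.sqrt 2) * r ^ 2 + pinf * r + qinf / Real.sqrt 2 = 0 := by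
  set s : ℝ := Real.sqrt 2 with hsdef
  have hs0 : 0 < s := Real.sqrt_pos.2 (by norm_num)
  have hs2 : s ^ 2 = 2 := Real.sq_sqrt (by norm_num)
  have hs1 : 1 < s := by nlinarith
  have hgc : ContinuousOn g (Set.Ici 0) := hg.continuousOn
  have hdiff : DifferentiableOn ℝ g (Set.Ici 0) := hg.differentiableOn one_ne_zero
  obtain ⟨Cp, hCp0, hCp⟩ := bddAux p pinf hp hpl
  obtain ⟨Cq, hCq0, hCq⟩ := bddAux q qinf hq hql
  set M : ℝ := max 1 ((P + Cp + Cq + 1) / P) with hMdef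
  have hM1 : 1 ≤ M := le_max_left _ _
  have hM2 : 1 ≤ M ^ 2 := by nlinarith
  have hMK : P + Cp + Cq + 1 ≤ P * M := by
    have := le_max_right 1 ((P + Cp + Cq + 1) / P)
    rw [div_le_iff₀ hP] at this
    linarith [this]
  have hPs : P / s ≤ P := div_le_self hP.le hs1.le
  have hPs0 : 0 ≤ P / s := div_nonneg hP.le hs0.le
  have keyU : ∀ t, 0 ≤ t → -P * M ^ 3 + (P / s) * M ^ 2 + p t * M + q t / s < 0 :=
    fun t ht => keyU' P M s Cp Cq (p t) (q t) hP hs0 hs1 hM1 hMK hCp0 hCq0 (hCp t ht) (hCq t ht)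
  have keyL : ∀ t, 0 ≤ t →
      0 < -P * (-M) ^ 3 + (P / s) * (-M) ^ 2 + p t * (-M) + q t / s :=
    fun t ht => keyL' P M s Cp Cq (p t) (q t) hP hs0 hs1 hM1 hMK hCp0 hCq0 (hCp t ht) (hCq t ht)
  -- boundedness of g
  have hg0' : g 0 = 1 / s := hg0
  have hub : ∀ t, 0 ≤ t → g t < M := by
    refine stayBelow g hgc hdiff M 0 0 le_rfl (fun t ht hgt => ?_) le_rfl ?_
    · rw [hode t ht, hgt]; exact keyU t ht
    · rw [hg0']
      have : 1 / s < 1 := by rw [div_lt_one hs0]; exact hs1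
      linarith
  have hlb : ∀ t, 0 ≤ t → -M < g t := by
    refine stayAbove g hgc hdiff (-M) 0 0 le_rfl (fun t ht hgt => ?_) le_rfl ?_
    · rw [hode t ht, hgt]; exact keyL t ht
    · rw [hg0']
      have : 0 < 1 / s := by positivity
      linarith
  -- limsup/liminf
  have hba : IsBoundedUnder (· ≤ ·) atTop g :=
    ⟨M, eventually_map.2 (by
      filter_upwards [eventually_ge_atTop (0:ℝ)] with t ht using (hub t ht).le)⟩
  have hbb : IsBoundedUnder (· ≥ ·) atTop g :=
    ⟨-M, eventually_map.2 (by
      filter_upwards [eventually_ge_atTop (0:ℝ)] with t ht using (hlb t ht).le)⟩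
  set l : ℝ := liminf g atTop with hldef
  set L : ℝ := limsup g atTop with hLdef
  have hlL : l ≤ L := liminf_le_limsup hba hbb
  have hconv : Tendsto g atTop (𝓝 L) := by
    rcases eq_or_lt_of_le hlL with heq | hlt
    · exact tendsto_of_liminf_eq_limsup heq rfl hba hbb
    · exfalso
      -- find c in (l, L) that is not a root of the limiting cubic
      have hex : ∃ c, l < c ∧ c < L ∧
          -P * c ^ 3 + (P / s) * c ^ 2 + pinf * c + qinf / s ≠ 0 := by
        by_contra hno
        push_neg at hno
        set Q : Polynomial ℝ := Polynomial.C (-P) * Polynomial.X ^ 3 +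
          Polynomial.C (P / s) * Polynomial.X ^ 2 + Polynomial.C pinf * Polynomial.X +
          Polynomial.C (qinf / s) with hQdef
        have hQ0 : Q = 0 := by
          refine Polynomial.eq_zero_of_infinite_isRoot Q ?_
          refine ((Set.Ioo_infinite hlt).mono ?_)
          intro c hc
          have := hno c hc.1 hc.2
          simp only [Polynomial.IsRoot, hQdef, Polynomial.eval_add, Polynomial.eval_mul,
            Polynomial.eval_pow, Polynomial.eval_C, Polynomial.eval_X, Set.mem_setOf_eq]
          linarith [this]
        have : Q.coeff 3 = -P := by
          simp [hQdef, Polynomial.coeff_add, Polynomial.coeff_C_mul, Polynomial.coeff_X_pow,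
            Polynomial.coeff_C, Polynomial.coeff_X]
        rw [hQ0] at this
        simp at this
        linarith
      obtain ⟨c, hcl, hcL, hcF⟩ := hex
      rcases lt_or_gt_of_ne hcF with hFneg | hFpos
      · -- F c < 0 : g eventually stays below c, contradicting c < L
        have htend : Tendsto (fun t => -P * c ^ 3 + (P / s) * c ^ 2 + p t * c + q t / s)
            atTop (𝓝 (-P * c ^ 3 + (P / s) * c ^ 2 + pinf * c + qinf / s)) :=
          ((tendsto_const_nhds.add (hpl.mul_const c)).add (hql.div_const s))
        have hev : ∀ᶠ t in atTop,
            -P * c ^ 3 + (P / s) * c ^ 2 + p t * c + q t / s < 0 :=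
          htend.eventually (Iio_mem_nhds hFneg)
        obtain ⟨T, hT⟩ := eventually_atTop.1 (hev.and (eventually_ge_atTop (0:ℝ)))
        have hfreq : ∃ᶠ t in atTop, g t < c :=
          frequently_lt_of_liminf_lt hba.isCoboundedUnder_ge hcl
        obtain ⟨t₁, ht₁T, hgt₁⟩ := (hfreq.and_eventually (eventually_ge_atTop (max T 0))).exists
        have hstay := stayBelow g hgc hdiff c (max T 0) t₁ (le_max_right _ _)
          (fun t ht hgt => by
            rw [hode t (le_trans (le_max_right _ _) ht), hgt]
            exact (hT t (le_trans (le_max_left _ _) ht)).1) hgt₁ ht₁T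
        have : L ≤ c := by
          refine limsup_le_of_le hbb.isCoboundedUnder_le ?_
          filter_upwards [eventually_ge_atTop t₁] with t ht using (hstay t ht).le
        linarith
      · -- F c > 0 : g eventually stays above c, contradicting l < c
        have htend : Tendsto (fun t => -P * c ^ 3 + (P / s) * c ^ 2 + p t * c + q t / s)
            atTop (𝓝 (-P * c ^ 3 + (P / s) * c ^ 2 + pinf * c + qinf / s)) :=
          ((tendsto_const_nhds.add (hpl.mul_const c)).add (hql.div_const s))
        have hev : ∀ᶠ t in atTop,
            0 < -P * c ^ 3 + (P / s) * c ^ 2 + p t * c + q t / s :=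
          htend.eventually (Ioi_mem_nhds hFpos)
        obtain ⟨T, hT⟩ := eventually_atTop.1 (hev.and (eventually_ge_atTop (0:ℝ)))
        have hfreq : ∃ᶠ t in atTop, c < g t :=
          frequently_lt_of_lt_limsup hbb.isCoboundedUnder_le hcL
        obtain ⟨t₁, ht₁T, hgt₁⟩ := (hfreq.and_eventually (eventually_ge_atTop (max T 0))).exists
        have hstay := stayAbove g hgc hdiff c (max T 0) t₁ (le_max_right _ _)
          (fun t ht hgt => by
            rw [hode t (le_trans (le_max_right _ _) ht), hgt]
            exact (hT t (le_trans (le_max_left _ _) ht)).1) hgt₁ ht₁T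
        have : c ≤ l := by
          refine le_liminf_of_le hba.isCoboundedUnder_ge ?_
          filter_upwards [eventually_ge_atTop t₁] with t ht using (hstay t ht).le
        linarith
  refine ⟨L, hconv, ?_⟩
  -- the limit is a root
  have hderiv_eq : deriv g =ᶠ[atTop]
      (fun t => -P * g t ^ 3 + (P / s) * g t ^ 2 + p t * g t + q t / s) := by
    filter_upwards [eventually_gt_atTop (0:ℝ)] with t ht
    rw [← derivWithin_of_mem_nhds (Ici_mem_nhds ht)]
    exact hode t ht.le
  have htd : Tendsto (fun t => -P * g t ^ 3 + (P / s) * g t ^ 2 + p t * g t + q t / s)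
      atTop (𝓝 (-P * L ^ 3 + (P / s) * L ^ 2 + pinf * L + qinf / s)) :=
    ((((hconv.pow 3).const_mul (-P)).add ((hconv.pow 2).const_mul (P / s))).add
      (hpl.mul hconv)).add (hql.div_const s)
  have hdtend : Tendsto (deriv g) atTop
      (𝓝 (-P * L ^ 3 + (P / s) * L ^ 2 + pinf * L + qinf / s)) :=
    htd.congr' hderiv_eq.symm
  -- mean value theorem sequence
  have hmvt : ∀ n : ℕ, ∃ x ∈ Set.Ioo ((n:ℝ) + 1) ((n:ℝ) + 2),
      deriv g x = (g ((n:ℝ) + 2) - g ((n:ℝ) + 1)) / (((n:ℝ) + 2) - ((n:ℝ) + 1)) := by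
    intro n
    refine exists_deriv_eq_slope g (by linarith) (hgc.mono ?_) ?_
    · intro x hx
      have : (0:ℝ) ≤ (n:ℝ) + 1 := by positivity
      exact le_trans this hx.1
    · intro x hx
      have hx0 : (0:ℝ) < x := lt_trans (by positivity) hx.1
      exact ((hdiff x hx0.le).differentiableAt (Ici_mem_nhds hx0)).differentiableWithinAt
  choose x hx1 hx2 using hmvt
  have hxa : Tendsto x atTop atTop := by
    refine tendsto_atTop_mono (fun n => ?_) tendsto_natCast_atTop_atTop
    exact le_trans (by linarith) (hx1 n).1.le
  have h1 : Tendsto (fun n => deriv g (x n)) atTop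
      (𝓝 (-P * L ^ 3 + (P / s) * L ^ 2 + pinf * L + qinf / s)) := hdtend.comp hxa
  have h2 : Tendsto (fun n : ℕ => deriv g (x n)) atTop (𝓝 0) := by
    have he : (fun n : ℕ => deriv g (x n)) =
        fun n : ℕ => g ((n:ℝ) + 2) - g ((n:ℝ) + 1) := by
      funext n
      rw [hx2 n, show ((n:ℝ) + 2) - ((n:ℝ) + 1) = 1 by ring, div_one]
    rw [he]
    have t2 : Tendsto (fun n : ℕ => (n:ℝ) + 2) atTop atTop :=
      tendsto_atTop_add_const_right _ 2 tendsto_natCast_atTop_atTop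
    have t1 : Tendsto (fun n : ℕ => (n:ℝ) + 1) atTop atTop :=
      tendsto_atTop_add_const_right _ 1 tendsto_natCast_atTop_atTop
    have := (hconv.comp t2).sub (hconv.comp t1)
    simpa using this
  exact tendsto_nhds_unique h1 h2
end

section
/- Let P > 0, let p, q : [0,∞) → ℝ be continuous, and let 0 < T₀ < ∞. If g : [0,T₀) → ℝ is continuously differentiable, satisfies g′(t) = −P·g(t)³ + (P/√2)·g(t)² + p(t)·g(t) + q(t)/√2 for all t ∈ [0,T₀), and g(0) = 1/√2, then g is bounded on [0,T₀). In particular, no solution of this initial value problem blows up (tends to +∞ or −∞) in finite time. -/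
open Set

/-- Any continuously differentiable solution of the IVP on a finite
interval [0,T₀) is bounded there; in particular no solution blows up in finite time. -/
theorem ou_acgn_ode_no_blowup (P : ℝ) (hP : 0 < P) (p q : ℝ → ℝ)
    (hp : ContinuousOn p (Set.Ici (0:ℝ))) (hq : ContinuousOn q (Set.Ici (0:ℝ)))
    (T₀ : ℝ) (hT₀ : 0 < T₀) (g : ℝ → ℝ)
    (hg : ContDiffOn ℝ 1 g (Set.Ico (0:ℝ) T₀)) (hg0 : g 0 = 1 / Real.sqrt 2)
    (hode : ∀ t ∈ Set.Ico (0:ℝ) T₀, derivWithin g (Set.Ico (0:ℝ) T₀) t =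
      -P * g t ^ 3 + (P / Real.sqrt 2) * g t ^ 2 + p t * g t + q t / Real.sqrt 2) :
    ∃ M : ℝ, ∀ t ∈ Set.Ico (0:ℝ) T₀, |g t| ≤ M := by
  have hs2 : (1:ℝ) < Real.sqrt 2 := by
    have := Real.sqrt_lt_sqrt (by norm_num) (by norm_num : (1:ℝ) < 2)
    simpa using this
  have hs2pos : (0:ℝ) < Real.sqrt 2 := lt_trans one_pos hs2
  -- bounds on p and q on [0, T₀]
  obtain ⟨Cp, hCp⟩ := (isCompact_Icc (a := (0:ℝ)) (b := T₀)).exists_bound_of_continuousOn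
    (hp.mono Icc_subset_Ici_self)
  obtain ⟨Cq, hCq⟩ := (isCompact_Icc (a := (0:ℝ)) (b := T₀)).exists_bound_of_continuousOn
    (hq.mono Icc_subset_Ici_self)
  set C : ℝ := max (max Cp Cq) 0 with hC
  have hC0 : 0 ≤ C := le_max_right _ _
  have hCp' : ∀ x ∈ Icc (0:ℝ) T₀, |p x| ≤ C := fun x hx =>
    (hCp x hx).trans (le_max_of_le_left (le_max_left _ _))
  have hCq' : ∀ x ∈ Icc (0:ℝ) T₀, |q x| ≤ C := fun x hx =>
    (hCq x hx).trans (le_max_of_le_left (le_max_right _ _))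
  set M : ℝ := max 1 ((P / Real.sqrt 2 + C + C / Real.sqrt 2 + 1) / P) with hM
  have hM1 : (1:ℝ) ≤ M := le_max_left _ _
  have hM0 : (0:ℝ) ≤ M := le_trans zero_le_one hM1
  have hMkey : P / Real.sqrt 2 + C + C / Real.sqrt 2 + 1 ≤ P * M := by
    have h := le_max_right 1 ((P / Real.sqrt 2 + C + C / Real.sqrt 2 + 1) / P)
    have := (div_le_iff₀ hP).mp h
    linarith
  -- the main inequality: -P M³ + (P/√2) M² + C M + C/√2 < 0
  have hkey : -P * M ^ 3 + (P / Real.sqrt 2) * M ^ 2 + C * M + C / Real.sqrt 2 < 0 := by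
    have h1 : (P / Real.sqrt 2 + C + C / Real.sqrt 2 + 1) * M ^ 2 ≤ P * M * M ^ 2 := by
      nlinarith
    have hM2 : (1:ℝ) ≤ M ^ 2 := by nlinarith
    have hCs : 0 ≤ C / Real.sqrt 2 := div_nonneg hC0 hs2pos.le
    have hPs : 0 ≤ P / Real.sqrt 2 := div_nonneg hP.le hs2pos.le
    nlinarith [mul_le_mul_of_nonneg_left hM2 hCs, mul_le_mul_of_nonneg_left hM2 hC0]
  have hg0M : g 0 ≤ M := by
    rw [hg0]
    have : 1 / Real.sqrt 2 ≤ 1 := by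
      rw [div_le_one hs2pos]; exact hs2.le
    linarith
  have hg0M' : -M ≤ g 0 := by
    rw [hg0]
    have : 0 ≤ 1 / Real.sqrt 2 := by positivity
    linarith
  refine ⟨M, fun t ht => ?_⟩
  set s : Set ℝ := Ico (0:ℝ) T₀
  set G : ℝ → ℝ := fun x => -P * g x ^ 3 + (P / Real.sqrt 2) * g x ^ 2
      + p x * g x + q x / Real.sqrt 2 with hG
  have hderiv : ∀ x ∈ Ico (0:ℝ) t, HasDerivWithinAt g (G x) (Ici x) x := by
    intro x hx
    have hxs : x ∈ s := ⟨hx.1, lt_trans hx.2 ht.2⟩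
    have hd : HasDerivWithinAt g (derivWithin g s x) s x :=
      ((hg.differentiableOn one_ne_zero) x hxs).hasDerivWithinAt
    have hmem : s ∈ nhdsWithin x (Ici x) := by
      have h1 : Ico x T₀ ∈ nhdsWithin x (Ici x) := by
        rw [mem_nhdsWithin]
        exact ⟨Iio T₀, isOpen_Iio, lt_trans hx.2 ht.2, fun y hy => ⟨hy.2, hy.1⟩⟩
      exact Filter.mem_of_superset h1 (fun y hy => ⟨le_trans hx.1 hy.1, hy.2⟩)
    have := hd.mono_of_mem_nhdsWithin hmem
    rwa [hode x hxs] at this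
  have hcont : ContinuousOn g (Icc 0 t) := (hg.continuousOn).mono
    (fun y hy => ⟨hy.1, lt_of_le_of_lt hy.2 ht.2⟩)
  have hIcc : ∀ x ∈ Ico (0:ℝ) t, x ∈ Icc (0:ℝ) T₀ :=
    fun x hx => ⟨hx.1, le_of_lt (lt_trans hx.2 ht.2)⟩
  -- upper bound
  have hupper : ∀ x ∈ Icc (0:ℝ) t, g x ≤ M := by
    refine image_le_of_deriv_right_lt_deriv_boundary (f' := G) hcont hderiv hg0M
      (B' := fun _ => 0) (fun x => hasDerivAt_const x M) ?_
    intro x hx hgx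
    have hpx := hCp' x (hIcc x hx)
    have hqx := hCq' x (hIcc x hx)
    have h1 : p x * M ≤ C * M :=
      mul_le_mul_of_nonneg_right (le_trans (le_abs_self _) hpx) hM0
    have h2 : q x / Real.sqrt 2 ≤ C / Real.sqrt 2 :=
      (div_le_div_iff_of_pos_right hs2pos).mpr (le_trans (le_abs_self _) hqx)
    have hGexp : G x = -P * M ^ 3 + (P / Real.sqrt 2) * M ^ 2
        + p x * M + q x / Real.sqrt 2 := by
      rw [hG]; dsimp only; rw [hgx]
    show G x < (0:ℝ)
    rw [hGexp]; linarith
  -- lower bound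
  have hlower : ∀ x ∈ Icc (0:ℝ) t, -g x ≤ M := by
    refine image_le_of_deriv_right_lt_deriv_boundary (f := fun x => -g x) (f' := fun x => -G x)
      hcont.neg (fun x hx => (hderiv x hx).neg) (show -g 0 ≤ M by linarith)
      (B' := fun _ => 0) (fun x => hasDerivAt_const x M) ?_
    intro x hx hgx
    have hgx' : g x = -M := by
      have : -g x = M := hgx
      linarith
    have hpx := hCp' x (hIcc x hx)
    have hqx := hCq' x (hIcc x hx)
    have h1 : p x * M ≤ C * M :=
      mul_le_mul_of_nonneg_right (le_trans (le_abs_self _) hpx) hM0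
    have h2 : -(C / Real.sqrt 2) ≤ q x / Real.sqrt 2 := by
      have hq1 : -C ≤ q x := by
        have := neg_abs_le (q x); linarith
      have := (div_le_div_iff_of_pos_right hs2pos).mpr hq1
      rw [neg_div] at this
      linarith
    have hGexp : G x = P * M ^ 3 + (P / Real.sqrt 2) * M ^ 2
        - p x * M + q x / Real.sqrt 2 := by
      rw [hG]; dsimp only; rw [hgx']; ring
    show -G x < (0:ℝ)
    have hPs : 0 ≤ (P / Real.sqrt 2) * M ^ 2 := by positivity
    rw [hGexp]; linarith
  have ht' : t ∈ Icc (0:ℝ) t := ⟨ht.1, le_rfl⟩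
  rw [abs_le]
  exact ⟨by linarith [hlower t ht'], hupper t ht'⟩
end

section
/- Let P > 0, let l_u : [0,∞) → ℝ be continuous, and let l_d : [0,∞) → ℝ be continuously differentiable with l_d(t) ≠ 0 for all t ≥ 0. Let g : [0,∞) → ℝ be a continuously differentiable solution of g′(t) = −P·g(t)³ + (P/√2)·g(t)² − (l_d′(t)/l_d(t))·g(t) + (l_d′(t)+l_u(t))/(√2·l_d(t)) with g(0) = 1/√2, and set A(t) = √P · exp(∫₀ᵗ P·g(s)² ds). Then for every t ≥ 0: √2 · g(t) · A(t) · l_d(t) = l_d(t)·A(t) + ∫₀ᵗ l_u(s)·A(s) ds. -/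
open Set intervalIntegral MeasureTheory

/-- With g solving the Abel equation and
A(t) = √P·exp(∫₀ᵗ P g(s)² ds), for every t ≥ 0 one has
√2·g(t)·A(t)·l_d(t) = l_d(t)·A(t) + ∫₀ᵗ l_u(s)·A(s) ds. -/
theorem sk_amplitude_identity (P : ℝ) (hP : 0 < P) (lu ld ld' : ℝ → ℝ)
    (hlu : ContinuousOn lu (Set.Ici (0:ℝ)))
    (hld : ∀ t ∈ Set.Ici (0:ℝ), HasDerivWithinAt ld (ld' t) (Set.Ici (0:ℝ)) t)
    (hld' : ContinuousOn ld' (Set.Ici (0:ℝ)))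
    (hldne : ∀ t ∈ Set.Ici (0:ℝ), ld t ≠ 0)
    (g : ℝ → ℝ) (hg : ContDiffOn ℝ 1 g (Set.Ici (0:ℝ))) (hg0 : g 0 = 1 / Real.sqrt 2)
    (hode : ∀ t ∈ Set.Ici (0:ℝ), derivWithin g (Set.Ici (0:ℝ)) t =
      -P * g t ^ 3 + (P / Real.sqrt 2) * g t ^ 2 - (ld' t / ld t) * g t
        + (ld' t + lu t) / (Real.sqrt 2 * ld t))
    (A : ℝ → ℝ)
    (hA : ∀ t, A t = Real.sqrt P * Real.exp (∫ s in (0:ℝ)..t, P * g s ^ 2)) :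
    ∀ t ∈ Set.Ici (0:ℝ),
      Real.sqrt 2 * g t * A t * ld t = ld t * A t + ∫ s in (0:ℝ)..t, lu s * A s := by
  intro x hx
  have hs2 : Real.sqrt 2 ≠ 0 := by positivity
  have hgc : ContinuousOn g (Ici (0:ℝ)) := hg.continuousOn
  have hldc : ContinuousOn ld (Ici (0:ℝ)) := fun t ht => (hld t ht).continuousWithinAt
  -- the integrand of B
  have hfc : ContinuousOn (fun s => P * g s ^ 2) (Ici (0:ℝ)) :=
    continuousOn_const.mul (hgc.pow 2)
  have hIcc : Icc (0:ℝ) x ⊆ Ici 0 := fun s hs => hs.1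
  -- B continuous on Icc 0 x
  have hint : ∀ t ∈ Icc (0:ℝ) x, IntervalIntegrable (fun s => P * g s ^ 2) volume 0 t := by
    intro t ht
    exact (hfc.mono (fun s hs => by
      rw [uIcc_of_le ht.1] at hs; exact hs.1)).intervalIntegrable
  have hBc : ContinuousOn (fun t => ∫ s in (0:ℝ)..t, P * g s ^ 2) (Icc 0 x) := by
    have := intervalIntegral.continuousOn_primitive_interval
      (f := fun s => P * g s ^ 2) (a := (0:ℝ)) (b := x) (μ := volume)
      (((hfc.mono (by rw [uIcc_of_le hx]; exact hIcc)).integrableOn_compact isCompact_uIcc))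
    rwa [uIcc_of_le hx] at this
  have hAc : ContinuousOn A (Icc 0 x) := by
    have : ContinuousOn (fun t => Real.sqrt P * Real.exp (∫ s in (0:ℝ)..t, P * g s ^ 2))
        (Icc 0 x) := continuousOn_const.mul (Real.continuous_exp.comp_continuousOn hBc)
    exact this.congr (fun t _ => hA t)
  -- derivative of A on the interior
  have hAd : ∀ t ∈ Ioo (0:ℝ) x, HasDerivAt A (P * g t ^ 2 * A t) t := by
    intro t ht
    have htI : Ici (0:ℝ) ∈ nhds t := Ici_mem_nhds ht.1
    have hct : ContinuousAt (fun s => P * g s ^ 2) t := (hfc.continuousAt htI)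
    have hB : HasDerivAt (fun u => ∫ s in (0:ℝ)..u, P * g s ^ 2) (P * g t ^ 2) t :=
      intervalIntegral.integral_hasDerivAt_right (hint t ⟨ht.1.le, ht.2.le⟩)
        (((hfc.mono Set.Ioi_subset_Ici_self).stronglyMeasurableAtFilter isOpen_Ioi) t ht.1) hct
    have : HasDerivAt (fun u => Real.sqrt P * Real.exp (∫ s in (0:ℝ)..u, P * g s ^ 2))
        (Real.sqrt P * (Real.exp (∫ s in (0:ℝ)..t, P * g s ^ 2) * (P * g t ^ 2))) t :=
      ((hB.exp).const_mul _)
    have h2 : HasDerivAt A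
        (Real.sqrt P * (Real.exp (∫ s in (0:ℝ)..t, P * g s ^ 2) * (P * g t ^ 2))) t := by
      apply this.congr_of_eventuallyEq
      filter_upwards with u; rw [hA u]
    convert h2 using 1
    rw [hA t]; ring
  -- the function H
  set H : ℝ → ℝ := fun t => Real.sqrt 2 * g t * A t * ld t - ld t * A t with hH
  have hHc : ContinuousOn H (Icc 0 x) :=
    (((continuousOn_const.mul (hgc.mono hIcc)).mul hAc).mul (hldc.mono hIcc)).sub
      ((hldc.mono hIcc).mul hAc)
  have hHd : ∀ t ∈ Ioo (0:ℝ) x, HasDerivAt H (lu t * A t) t := by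
    intro t ht
    have htI : Ici (0:ℝ) ∈ nhds t := Ici_mem_nhds ht.1
    have htm : t ∈ Ici (0:ℝ) := ht.1.le
    have hgd : HasDerivAt g (derivWithin g (Ici (0:ℝ)) t) t :=
      (((hg.differentiableOn one_ne_zero) t htm).hasDerivWithinAt).hasDerivAt htI
    have hldd : HasDerivAt ld (ld' t) t := (hld t htm).hasDerivAt htI
    have hAd' := hAd t ht
    have hD : HasDerivAt H
        (((Real.sqrt 2 * derivWithin g (Ici (0:ℝ)) t * A t
            + Real.sqrt 2 * g t * (P * g t ^ 2 * A t)) * ld t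
          + Real.sqrt 2 * g t * A t * ld' t)
          - (ld' t * A t + ld t * (P * g t ^ 2 * A t))) t := by
      exact (((hgd.const_mul (Real.sqrt 2)).mul hAd').mul hldd).sub (hldd.mul hAd')
    convert hD using 1
    rw [hode t htm]
    have hldt : ld t ≠ 0 := hldne t htm
    field_simp
    ring
  -- lu * A integrable
  have hluA : IntervalIntegrable (fun s => lu s * A s) volume 0 x := by
    apply ContinuousOn.intervalIntegrable
    rw [uIcc_of_le hx]
    exact ((hlu.mono hIcc).mul hAc)
  have key := intervalIntegral.integral_eq_sub_of_hasDeriv_right_of_le hx hHc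
    (fun t ht => (hHd t ht).hasDerivWithinAt) hluA
  have hH0 : H 0 = 0 := by
    simp only [hH, hg0]
    rw [mul_one_div, div_self hs2, one_mul]
    ring
  rw [key, hH0, sub_zero, hH]
  ring
end

section
/- Let P > 0, let l_u : [0,∞) → ℝ be continuous, and let l_d : [0,∞) → ℝ be continuously differentiable with l_d(t) ≠ 0 for all t ≥ 0. Let g be a continuously differentiable solution of g′(t) = −P·g(t)³ + (P/√2)·g(t)² − (l_d′(t)/l_d(t))·g(t) + (l_d′(t)+l_u(t))/(√2·l_d(t)) with g(0) = 1/√2, set A(t) = √P·exp(∫₀ᵗ P·g(s)² ds) and H(t) = A(t) + (1/l_d(t))·∫₀ᵗ l_u(s)·A(s) ds. Then for all t ≥ 0: (i) 2·A(t)·A′(t) = P·H(t)², and (ii) A(t)² = P·(1 + ∫₀ᵗ H(s)² ds). -/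
/-- FTC within `Ici 0` for integrands continuous on `Ici 0`. -/
lemma sk_ftc_Ici {f : ℝ → ℝ} (hf : ContinuousOn f (Set.Ici (0:ℝ))) {t : ℝ} (ht : (0:ℝ) ≤ t) :
    HasDerivWithinAt (fun u => ∫ s in (0:ℝ)..u, f s) (f t) (Set.Ici (0:ℝ)) t := by
  have hint : IntervalIntegrable f MeasureTheory.volume 0 t := by
    apply ContinuousOn.intervalIntegrable
    apply hf.mono
    rw [Set.uIcc_of_le ht]
    exact Set.Icc_subset_Ici_self
  rcases eq_or_lt_of_le ht with h0 | h0
  · subst h0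
    exact intervalIntegral.integral_hasDerivWithinAt_right (s := Set.Ici (0:ℝ))
      (t := Set.Ioi (0:ℝ)) hint
      ⟨Set.Ici 0, nhdsWithin_mono 0 Set.Ioi_subset_Ici_self self_mem_nhdsWithin,
        hf.aestronglyMeasurable measurableSet_Ici⟩
      ((hf 0 Set.self_mem_Ici).mono Set.Ioi_subset_Ici_self)
  · have hmem : Set.Ici (0:ℝ) ∈ nhds t := Ici_mem_nhds h0
    have hca : ContinuousAt f t := hf.continuousAt hmem
    have : HasDerivAt (fun u => ∫ s in (0:ℝ)..u, f s) (f t) t :=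
      intervalIntegral.integral_hasDerivAt_right hint
        ⟨Set.Ici 0, hmem, hf.aestronglyMeasurable measurableSet_Ici⟩ hca
    exact this.hasDerivWithinAt

/-- Constancy from vanishing derivative within `Ici 0`. -/
lemma sk_const_of_zero {f : ℝ → ℝ}
    (hf : ∀ x ∈ Set.Ici (0:ℝ), HasDerivWithinAt f 0 (Set.Ici (0:ℝ)) x)
    {t : ℝ} (ht : (0:ℝ) ≤ t) : f t = f 0 := by
  have := Convex.norm_image_sub_le_of_norm_hasDerivWithin_le (f' := fun _ => (0:ℝ))
    hf (fun x _ => by simp : ∀ x ∈ Set.Ici (0:ℝ), ‖(0:ℝ)‖ ≤ 0) (convex_Ici 0)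
    Set.self_mem_Ici ht
  simp only [zero_mul, norm_le_zero_iff, sub_eq_zero] at this
  exact this

/-- With g solving the Abel equation,
A(t) = √P·exp(∫₀ᵗ P g(s)² ds) and H(t) = A(t) + (1/l_d(t))∫₀ᵗ l_u(s)A(s) ds,
for all t ≥ 0: (i) 2·A(t)·A′(t) = P·H(t)², and (ii) A(t)² = P·(1 + ∫₀ᵗ H(s)² ds). -/
theorem sk_amplitude_derivative_identities (P : ℝ) (hP : 0 < P) (lu ld ld' : ℝ → ℝ)
    (hlu : ContinuousOn lu (Set.Ici (0:ℝ)))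
    (hld : ∀ t ∈ Set.Ici (0:ℝ), HasDerivWithinAt ld (ld' t) (Set.Ici (0:ℝ)) t)
    (hld' : ContinuousOn ld' (Set.Ici (0:ℝ)))
    (hldne : ∀ t ∈ Set.Ici (0:ℝ), ld t ≠ 0)
    (g : ℝ → ℝ) (hg : ContDiffOn ℝ 1 g (Set.Ici (0:ℝ))) (hg0 : g 0 = 1 / Real.sqrt 2)
    (hode : ∀ t ∈ Set.Ici (0:ℝ), derivWithin g (Set.Ici (0:ℝ)) t =
      -P * g t ^ 3 + (P / Real.sqrt 2) * g t ^ 2 - (ld' t / ld t) * g t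
        + (ld' t + lu t) / (Real.sqrt 2 * ld t))
    (A : ℝ → ℝ)
    (hA : ∀ t, A t = Real.sqrt P * Real.exp (∫ s in (0:ℝ)..t, P * g s ^ 2))
    (H : ℝ → ℝ)
    (hH : ∀ t, H t = A t + (1 / ld t) * ∫ s in (0:ℝ)..t, lu s * A s) :
    ∀ t ∈ Set.Ici (0:ℝ),
      (∃ a : ℝ, HasDerivWithinAt A a (Set.Ici (0:ℝ)) t ∧ 2 * A t * a = P * H t ^ 2) ∧
      A t ^ 2 = P * (1 + ∫ s in (0:ℝ)..t, H s ^ 2) := by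
  set S := Set.Ici (0:ℝ) with hS
  have hs2 : Real.sqrt 2 ^ 2 = 2 := Real.sq_sqrt (by norm_num)
  have hs2ne : Real.sqrt 2 ≠ 0 := by positivity
  have hgc : ContinuousOn g S := hg.continuousOn
  -- continuity of the inner integrand
  have hPg2 : ContinuousOn (fun s => P * g s ^ 2) S :=
    (continuousOn_const.mul (hgc.pow 2))
  have hAfun : A = fun t => Real.sqrt P * Real.exp (∫ s in (0:ℝ)..t, P * g s ^ 2) :=
    funext hA
  -- derivative of A
  have hAd : ∀ t ∈ S, HasDerivWithinAt A (P * g t ^ 2 * A t) S t := by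
    intro t ht
    have h1 := sk_ftc_Ici hPg2 ht
    have h2 := (h1.exp).const_mul (Real.sqrt P)
    have h3 := h2.congr (fun y _ => (hA y)) (hA t)
    have h4 : P * g t ^ 2 * A t
        = Real.sqrt P * (Real.exp (∫ s in (0:ℝ)..t, P * g s ^ 2) * (P * g t ^ 2)) := by
      rw [hA t]; ring
    rw [h4]
    exact h3
  have hAc : ContinuousOn A S := fun t ht => ((hAd t ht).continuousWithinAt)
  -- derivative of B
  set B : ℝ → ℝ := fun t => ∫ s in (0:ℝ)..t, lu s * A s with hB
  have hBd : ∀ t ∈ S, HasDerivWithinAt B (lu t * A t) S t := fun t ht =>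
    sk_ftc_Ici (hlu.mul hAc) ht
  -- derivative of g
  have hgd : ∀ t ∈ S, HasDerivWithinAt g
      (-P * g t ^ 3 + (P / Real.sqrt 2) * g t ^ 2 - (ld' t / ld t) * g t
        + (ld' t + lu t) / (Real.sqrt 2 * ld t)) S t := by
    intro t ht
    rw [← hode t ht]
    exact ((hg.differentiableOn one_ne_zero) t ht).hasDerivWithinAt
  -- the conserved quantity
  set φ : ℝ → ℝ := fun t => (Real.sqrt 2 * g t - 1) * (A t * ld t) - B t with hφ
  have hφd : ∀ t ∈ S, HasDerivWithinAt φ 0 S t := by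
    intro t ht
    have d1 : HasDerivWithinAt (fun t => Real.sqrt 2 * g t - 1)
        (Real.sqrt 2 * (-P * g t ^ 3 + (P / Real.sqrt 2) * g t ^ 2 - (ld' t / ld t) * g t
        + (ld' t + lu t) / (Real.sqrt 2 * ld t))) S t :=
      ((hgd t ht).const_mul (Real.sqrt 2)).sub_const 1
    have d2 : HasDerivWithinAt (fun t => A t * ld t)
        ((P * g t ^ 2 * A t) * ld t + A t * ld' t) S t := (hAd t ht).mul (hld t ht)
    have d3 := (d1.mul d2).sub (hBd t ht)
    refine d3.congr_deriv ?_
    have hne := hldne t ht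
    field_simp
    ring
  have hφ0 : φ 0 = 0 := by
    simp only [hφ, hB, intervalIntegral.integral_same, hg0]
    field_simp
    ring
  -- hence H = √2 g A on S
  have hHe : ∀ t ∈ S, H t = Real.sqrt 2 * g t * A t := by
    intro t ht
    have hc : φ t = 0 := by rw [sk_const_of_zero hφd ht, hφ0]
    have hne := hldne t ht
    have hBt : B t = (Real.sqrt 2 * g t - 1) * (A t * ld t) := by
      have := hc
      simp only [hφ, sub_eq_zero] at this
      exact this.symm
    rw [hH t, show (∫ s in (0:ℝ)..t, lu s * A s) = B t from rfl, hBt]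
    field_simp
    ring
  -- the continuous function H
  have hldc : ContinuousOn ld S := fun t ht => (hld t ht).continuousWithinAt
  have hBc : ContinuousOn B S := fun t ht => (hBd t ht).continuousWithinAt
  have hHc : ContinuousOn H S := by
    have : ContinuousOn (fun t => A t + (1 / ld t) * B t) S :=
      hAc.add (((continuousOn_const.div hldc (hldne))).mul hBc)
    exact this.congr fun t ht => by rw [hH t, hB]
  -- part (ii) function
  set F : ℝ → ℝ := fun t => A t ^ 2 - P * (1 + ∫ s in (0:ℝ)..t, H s ^ 2) with hF
  have key : ∀ t ∈ S, 2 * A t * (P * g t ^ 2 * A t) = P * H t ^ 2 := by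
    intro t ht
    rw [hHe t ht]
    have : (Real.sqrt 2 * g t * A t) ^ 2 = 2 * g t ^ 2 * A t ^ 2 := by
      rw [mul_pow, mul_pow, hs2]
    rw [this]; ring
  have hFd : ∀ t ∈ S, HasDerivWithinAt F 0 S t := by
    intro t ht
    have d1 : HasDerivWithinAt (fun t => A t ^ 2) (2 * A t * (P * g t ^ 2 * A t)) S t := by
      have := (hAd t ht).pow 2
      refine this.congr_deriv ?_
      push_cast
      ring
    have d2 : HasDerivWithinAt (fun t => P * (1 + ∫ s in (0:ℝ)..t, H s ^ 2))
        (P * H t ^ 2) S t := by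
      have := ((sk_ftc_Ici (hHc.pow 2) ht).const_add 1).const_mul P
      exact this.congr_deriv rfl
    have := d1.sub d2
    rw [key t ht] at this
    simp at this
    exact this
  have hF0 : F 0 = 0 := by
    simp only [hF, intervalIntegral.integral_same, add_zero, mul_one]
    rw [hA 0]
    simp [Real.sq_sqrt hP.le]
  intro t ht
  refine ⟨⟨P * g t ^ 2 * A t, hAd t ht, key t ht⟩, ?_⟩
  have : F t = 0 := by rw [sk_const_of_zero hFd ht, hF0]
  have := sub_eq_zero.mp this
  linarith [this]
end

section
/- Let P > 0, let l_u : [0,∞) → ℝ be continuous, and let l_d : [0,∞) → ℝ be continuously differentiable with l_d(t) ≠ 0 for all t ≥ 0. Let g be a continuously differentiable solution of g′(t) = −P·g(t)³ + (P/√2)·g(t)² − (l_d′(t)/l_d(t))·g(t) + (l_d′(t)+l_u(t))/(√2·l_d(t)) with g(0) = 1/√2, set A(t) = √P·exp(∫₀ᵗ P·g(s)² ds) and H(t) = A(t) + (1/l_d(t))·∫₀ᵗ l_u(s)·A(s) ds. If lim_{t→∞} g(t) = r for some real r, then the limit lim_{T→∞} (1/(2T)) ∫₀ᵀ H(t)²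 / (1 + ∫₀ᵗ H(s)² ds) dt exists and equals P·r². (This is the analytic core of the identity Ī_SK(Θ;Y) = P·r_P² for the Schalkwijk–Kailath mutual information rate.) -/
open Set Filter MeasureTheory intervalIntegral

open Set Filter MeasureTheory intervalIntegral

lemma SK_uIcc_subset {a b : ℝ} (ha : 0 ≤ a) (hb : 0 ≤ b) : Set.uIcc a b ⊆ Set.Ici 0 :=
  fun x hx => le_trans (le_min ha hb) hx.1

lemma SK_ii {f : ℝ → ℝ} (hf : ContinuousOn f (Set.Ici 0)) {a b : ℝ} (ha : 0 ≤ a) (hb : 0 ≤ b) :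
    IntervalIntegrable f MeasureTheory.volume a b :=
  (hf.mono (SK_uIcc_subset ha hb)).intervalIntegrable

lemma SK_cesaro {f : ℝ → ℝ} {L : ℝ} (hf : ContinuousOn f (Set.Ici 0))
    (hl : Filter.Tendsto f Filter.atTop (nhds L)) :
    Filter.Tendsto (fun T : ℝ => (1/T) * ∫ t in (0:ℝ)..T, f t) Filter.atTop (nhds L) := by
  rw [Metric.tendsto_atTop] at hl ⊢
  intro ε hε
  obtain ⟨T₀', hT₀'⟩ := hl (ε/4) (by positivity)
  set T₀ : ℝ := max T₀' 0 with hT0def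
  have hT₀0 : (0:ℝ) ≤ T₀ := le_max_right _ _
  have hbound : ∀ t, T₀ ≤ t → |f t - L| ≤ ε/4 := fun t ht =>
    le_of_lt (by simpa [Real.dist_eq] using hT₀' t (le_trans (le_max_left _ _) ht))
  set C : ℝ := |(∫ t in (0:ℝ)..T₀, f t) - T₀ * L| + 1 with hCdef
  have hC : 0 < C := by positivity
  have hC1 : |(∫ t in (0:ℝ)..T₀, f t) - T₀ * L| = C - 1 := by rw [hCdef]; ring
  refine ⟨max (T₀ + 1) (4*C/ε), fun T hT => ?_⟩
  have hTT₀ : T₀ ≤ T := by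
    have := le_trans (le_max_left (T₀+1) (4*C/ε)) hT; linarith
  have hT0 : 0 < T := lt_of_lt_of_le (by linarith) (le_trans (le_max_left _ _) hT)
  have hT4C : 4*C/ε ≤ T := le_trans (le_max_right _ _) hT
  have i1 : IntervalIntegrable f MeasureTheory.volume 0 T₀ := SK_ii hf le_rfl hT₀0
  have i2 : IntervalIntegrable f MeasureTheory.volume T₀ T :=
    SK_ii hf hT₀0 (le_trans hT₀0 hTT₀)
  have hsplit : (∫ t in (0:ℝ)..T, f t) = (∫ t in (0:ℝ)..T₀, f t) + ∫ t in T₀..T, f t :=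
    (intervalIntegral.integral_add_adjacent_intervals i1 i2).symm
  have key : |∫ t in T₀..T, (f t - L)| ≤ (ε/4) * |T - T₀| := by
    have := intervalIntegral.norm_integral_le_of_norm_le_const (C := ε/4)
      (f := fun t => f t - L) (a := T₀) (b := T) ?_
    · simpa [Real.norm_eq_abs] using this
    · intro x hx
      rw [Set.uIoc_of_le hTT₀] at hx
      simpa [Real.norm_eq_abs] using hbound x hx.1.le
  have hint2 : (∫ t in T₀..T, (f t - L)) = (∫ t in T₀..T, f t) - (T - T₀) * L := by
    rw [intervalIntegral.integral_sub i2 intervalIntegrable_const,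
      intervalIntegral.integral_const, smul_eq_mul]
  have habs : |T - T₀| = T - T₀ := abs_of_nonneg (by linarith)
  have key2 : |(∫ t in T₀..T, f t) - (T - T₀) * L| ≤ (ε/4) * (T - T₀) := by
    rw [← hint2, ← habs]; exact key
  have hdec : (∫ t in (0:ℝ)..T, f t) - T * L =
      ((∫ t in (0:ℝ)..T₀, f t) - T₀ * L) + ((∫ t in T₀..T, f t) - (T - T₀) * L) := by
    rw [hsplit]; ring
  have hnum : |(∫ t in (0:ℝ)..T, f t) - T * L| ≤ (C - 1) + (ε/4) * (T - T₀) := by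
    rw [hdec, ← hC1]
    exact le_trans (abs_add_le _ _) (by gcongr)
  rw [Real.dist_eq]
  have heq : (1/T) * (∫ t in (0:ℝ)..T, f t) - L = (1/T) * ((∫ t in (0:ℝ)..T, f t) - T * L) := by
    field_simp
  rw [heq, abs_mul, abs_of_pos (by positivity : (0:ℝ) < 1/T)]
  have hCle : C ≤ ε * T / 4 := by
    rw [div_le_iff₀ hε] at hT4C; linarith
  calc (1/T) * |(∫ t in (0:ℝ)..T, f t) - T * L|
      ≤ (1/T) * ((C - 1) + (ε/4) * (T - T₀)) := by gcongr
    _ ≤ (1/T) * (ε * T / 4 + (ε/4) * T) := by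
        gcongr (1/T) * ?_
        have : (ε/4) * (T - T₀) ≤ (ε/4) * T := by nlinarith
        nlinarith
    _ = ε/2 := by field_simp; ring
    _ < ε := by linarith

open Set Filter MeasureTheory intervalIntegral

lemma SK_primc {f : ℝ → ℝ} (hf : ContinuousOn f (Set.Ici 0)) :
    ContinuousOn (fun t => ∫ x in (0:ℝ)..t, f x) (Set.Ici 0) := by
  intro t ht
  have h1 : ContinuousOn (fun u => ∫ x in (0:ℝ)..u, f x) (Set.uIcc 0 (t+1)) :=
    intervalIntegral.continuousOn_primitive_interval' (SK_ii hf le_rfl (by linarith [ht.out]))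
      Set.left_mem_uIcc
  have huicc : Set.uIcc (0:ℝ) (t+1) = Set.Icc 0 (t+1) := Set.uIcc_of_le (by linarith [ht.out])
  rw [huicc] at h1
  have h2 := h1 t ⟨ht.out, by linarith⟩
  refine h2.mono_of_mem_nhdsWithin ?_
  have : Set.Icc (0:ℝ) (t+1) = Set.Ici 0 ∩ Set.Iic (t+1) := (Set.Ici_inter_Iic).symm
  rw [this]
  exact Filter.inter_mem self_mem_nhdsWithin
    (mem_nhdsWithin_of_mem_nhds (Iic_mem_nhds (by linarith)))

lemma SK_ftc {f : ℝ → ℝ} (hf : ContinuousOn f (Set.Ici 0)) {t : ℝ} (ht : 0 ≤ t) :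
    HasDerivWithinAt (fun u => ∫ x in (0:ℝ)..u, f x) (f t) (Set.Ici t) t := by
  have hIoi : Set.Ioi t ⊆ Set.Ici (0:ℝ) := fun x hx => le_trans ht (le_of_lt hx)
  refine intervalIntegral.integral_hasDerivWithinAt_right (SK_ii hf le_rfl ht)
    ⟨Set.Ici 0, ?_, hf.aestronglyMeasurable measurableSet_Ici⟩
    ((hf t ht).mono hIoi)
  exact Filter.mem_of_superset self_mem_nhdsWithin hIoi


/-- If g(t) → r as t → ∞, then
(1/(2T)) ∫₀ᵀ H(t)²/(1 + ∫₀ᵗ H(s)² ds) dt → P·r² as T → ∞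
(the analytic core of Ī_SK(Θ;Y) = P·r_P²). -/
theorem sk_mutual_information_rate (P : ℝ) (hP : 0 < P) (lu ld ld' : ℝ → ℝ)
    (hlu : ContinuousOn lu (Set.Ici (0:ℝ)))
    (hld : ∀ t ∈ Set.Ici (0:ℝ), HasDerivWithinAt ld (ld' t) (Set.Ici (0:ℝ)) t)
    (hld' : ContinuousOn ld' (Set.Ici (0:ℝ)))
    (hldne : ∀ t ∈ Set.Ici (0:ℝ), ld t ≠ 0)
    (g : ℝ → ℝ) (hg : ContDiffOn ℝ 1 g (Set.Ici (0:ℝ))) (hg0 : g 0 = 1 / Real.sqrt 2)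
    (hode : ∀ t ∈ Set.Ici (0:ℝ), derivWithin g (Set.Ici (0:ℝ)) t =
      -P * g t ^ 3 + (P / Real.sqrt 2) * g t ^ 2 - (ld' t / ld t) * g t
        + (ld' t + lu t) / (Real.sqrt 2 * ld t))
    (A : ℝ → ℝ)
    (hA : ∀ t, A t = Real.sqrt P * Real.exp (∫ s in (0:ℝ)..t, P * g s ^ 2))
    (H : ℝ → ℝ)
    (hH : ∀ t, H t = A t + (1 / ld t) * ∫ s in (0:ℝ)..t, lu s * A s)
    (r : ℝ) (hr : Filter.Tendsto g Filter.atTop (nhds r)) :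
    Filter.Tendsto
      (fun T : ℝ => (1 / (2 * T)) *
        ∫ t in (0:ℝ)..T, H t ^ 2 / (1 + ∫ s in (0:ℝ)..t, H s ^ 2))
      Filter.atTop (nhds (P * r ^ 2)) := by
  have h2pos : (0:ℝ) < Real.sqrt 2 := Real.sqrt_pos.mpr (by norm_num)
  have h2ne : Real.sqrt 2 ≠ 0 := ne_of_gt h2pos
  have hs2 : Real.sqrt 2 * Real.sqrt 2 = 2 := Real.mul_self_sqrt (by norm_num)
  have hgc : ContinuousOn g (Set.Ici 0) := hg.continuousOn
  have hf2 : ContinuousOn (fun t => P * g t ^ 2) (Set.Ici 0) :=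
    continuousOn_const.mul (hgc.pow 2)
  have hEc : ContinuousOn (fun t => ∫ s in (0:ℝ)..t, P * g s ^ 2) (Set.Ici 0) := SK_primc hf2
  have hAc : ContinuousOn A (Set.Ici 0) := by
    have : ContinuousOn (fun t => Real.sqrt P * Real.exp (∫ s in (0:ℝ)..t, P * g s ^ 2))
        (Set.Ici 0) := continuousOn_const.mul (Real.continuous_exp.comp_continuousOn hEc)
    exact this.congr (fun t _ => hA t)
  have hApos : ∀ t, 0 < A t := fun t => by
    rw [hA t]; positivity
  have hA2 : ∀ t, A t ^ 2 = P * Real.exp (2 * ∫ s in (0:ℝ)..t, P * g s ^ 2) := by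
    intro t
    rw [hA t, mul_pow, Real.sq_sqrt hP.le, sq, ← Real.exp_add]
    ring_nf
  have hA' : ∀ t, 0 ≤ t → HasDerivWithinAt A (P * g t ^ 2 * A t) (Set.Ici t) t := by
    intro t ht
    have hE' := SK_ftc hf2 ht
    have := (hE'.exp.const_mul (Real.sqrt P))
    have heq : A = fun u => Real.sqrt P * Real.exp (∫ s in (0:ℝ)..u, P * g s ^ 2) := funext hA
    rw [heq]
    refine this.congr_deriv ?_
    show _ = P * g t ^ 2 * (Real.sqrt P * Real.exp (∫ s in (0:ℝ)..t, P * g s ^ 2))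
    ring
  have hluA : ContinuousOn (fun s => lu s * A s) (Set.Ici 0) := hlu.mul hAc
  have hBc : ContinuousOn (fun t => ∫ s in (0:ℝ)..t, lu s * A s) (Set.Ici 0) := SK_primc hluA
  have hgd : ∀ t, 0 ≤ t → HasDerivWithinAt g (derivWithin g (Set.Ici 0) t) (Set.Ici t) t := by
    intro t ht
    exact (((hg.differentiableOn one_ne_zero) t ht).hasDerivWithinAt).mono (Set.Ici_subset_Ici.2 ht)
  have hldc : ContinuousOn ld (Set.Ici 0) := fun t ht => (hld t ht).continuousWithinAt
  -- the function φ vanishes identically on [0, ∞)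
  set φ : ℝ → ℝ := fun t => ld t * ((Real.sqrt 2 * g t - 1) * A t)
      - ∫ s in (0:ℝ)..t, lu s * A s with hφdef
  have hφ0 : φ 0 = 0 := by
    simp only [hφdef, intervalIntegral.integral_same, hg0]
    rw [mul_one_div_cancel h2ne]
    ring
  have hφ' : ∀ t, 0 ≤ t → HasDerivWithinAt φ 0 (Set.Ici t) t := by
    intro t ht
    have h1 : HasDerivWithinAt ld (ld' t) (Set.Ici t) t :=
      (hld t ht).mono (Set.Ici_subset_Ici.2 ht)
    have h2 : HasDerivWithinAt (fun u => (Real.sqrt 2 * g u - 1) * A u)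
        ((Real.sqrt 2 * derivWithin g (Set.Ici 0) t) * A t
          + (Real.sqrt 2 * g t - 1) * (P * g t ^ 2 * A t)) (Set.Ici t) t :=
      (((hgd t ht).const_mul (Real.sqrt 2)).sub_const 1).mul (hA' t ht)
    have h3 := (h1.mul h2).sub (SK_ftc hluA ht)
    refine h3.congr_deriv ?_
    rw [hode t ht]
    have hld0 := hldne t ht
    field_simp
    ring_nf
  have hφzero : ∀ t, 0 ≤ t → φ t = 0 := by
    intro b hb
    have hcont : ContinuousOn φ (Set.Icc 0 b) := by
      apply ContinuousOn.mono _ (Set.Icc_subset_Ici_self)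
      exact (hldc.mul (((continuousOn_const.mul hgc).sub continuousOn_const).mul hAc)).sub hBc
    have := constant_of_has_deriv_right_zero hcont
      (fun x hx => (hφ' x hx.1).mono (fun y hy => hy))
    rw [← hφ0]
    exact this b ⟨hb, le_rfl⟩
  -- hence H t = √2 g t A t
  have hHA : ∀ t, 0 ≤ t → H t = Real.sqrt 2 * g t * A t := by
    intro t ht
    have h0 := hφzero t ht
    simp only [hφdef] at h0
    have hBeq : (∫ s in (0:ℝ)..t, lu s * A s) = ld t * ((Real.sqrt 2 * g t - 1) * A t) := by
      linarith
    rw [hH t, hBeq]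
    have hld0 := hldne t ht
    field_simp
    ring
  have hH2 : ∀ t, 0 ≤ t → H t ^ 2
      = 2 * P * g t ^ 2 * Real.exp (2 * ∫ s in (0:ℝ)..t, P * g s ^ 2) := by
    intro t ht
    rw [hHA t ht]
    linear_combination (g t ^ 2 * A t ^ 2) * hs2 + 2 * g t ^ 2 * hA2 t
  -- 1 + ∫₀ᵗ H² = exp(2 ∫₀ᵗ P g²)
  have hIH : ∀ t, 0 ≤ t → (1 + ∫ s in (0:ℝ)..t, H s ^ 2)
      = Real.exp (2 * ∫ s in (0:ℝ)..t, P * g s ^ 2) := by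
    intro t ht
    have hcongr : (∫ s in (0:ℝ)..t, H s ^ 2)
        = ∫ s in (0:ℝ)..t, 2 * P * g s ^ 2 * Real.exp (2 * ∫ u in (0:ℝ)..s, P * g u ^ 2) := by
      apply intervalIntegral.integral_congr
      intro s hs
      rw [Set.uIcc_of_le ht] at hs
      exact hH2 s hs.1
    have hfd : ∀ x ∈ Set.Ioo 0 t,
        HasDerivWithinAt (fun u => Real.exp (2 * ∫ s in (0:ℝ)..u, P * g s ^ 2))
          (2 * P * g x ^ 2 * Real.exp (2 * ∫ s in (0:ℝ)..x, P * g s ^ 2)) (Set.Ioi x) x := by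
      intro x hx
      have := ((SK_ftc hf2 hx.1.le).const_mul (2:ℝ)).exp
      refine (this.mono Set.Ioi_subset_Ici_self).congr_deriv ?_
      ring
    have hcont : ContinuousOn (fun u => Real.exp (2 * ∫ s in (0:ℝ)..u, P * g s ^ 2))
        (Set.Icc 0 t) :=
      (Real.continuous_exp.comp_continuousOn (continuousOn_const.mul hEc)).mono
        Set.Icc_subset_Ici_self
    have hfint : IntervalIntegrable
        (fun s => 2 * P * g s ^ 2 * Real.exp (2 * ∫ u in (0:ℝ)..s, P * g u ^ 2))
        MeasureTheory.volume 0 t := by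
      apply SK_ii _ le_rfl ht
      exact (continuousOn_const.mul (hgc.pow 2)).mul
        (Real.continuous_exp.comp_continuousOn (continuousOn_const.mul hEc))
    have := intervalIntegral.integral_eq_sub_of_hasDeriv_right_of_le ht hcont hfd hfint
    rw [hcongr, this]
    simp
  -- integrand equals 2 P g²
  have hratio : ∀ t, 0 ≤ t → H t ^ 2 / (1 + ∫ s in (0:ℝ)..t, H s ^ 2) = 2 * P * g t ^ 2 := by
    intro t ht
    rw [hIH t ht, hH2 t ht]
    rw [mul_div_assoc, div_self (Real.exp_ne_zero _), mul_one]
  -- reduce to the Cesàro mean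
  have hl2 : Filter.Tendsto (fun t => P * g t ^ 2) Filter.atTop (nhds (P * r ^ 2)) :=
    ((hr.pow 2).const_mul P)
  have hces := SK_cesaro hf2 hl2
  apply hces.congr'
  filter_upwards [Filter.eventually_ge_atTop (1:ℝ)] with T hT
  have hT0 : (0:ℝ) ≤ T := by linarith
  have hint : (∫ t in (0:ℝ)..T, H t ^ 2 / (1 + ∫ s in (0:ℝ)..t, H s ^ 2))
      = ∫ t in (0:ℝ)..T, 2 * P * g t ^ 2 := by
    apply intervalIntegral.integral_congr
    intro s hs
    rw [Set.uIcc_of_le hT0] at hs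
    exact hratio s hs.1
  rw [hint]
  have : (∫ t in (0:ℝ)..T, 2 * P * g t ^ 2) = 2 * ∫ t in (0:ℝ)..T, P * g t ^ 2 := by
    rw [← intervalIntegral.integral_const_mul]
    apply intervalIntegral.integral_congr
    intro s _
    ring
  rw [this]
  have hTne : T ≠ 0 := by linarith
  field_simp
end

section
/- Let P > 0, κ > 0 and λ ∈ ℝ with −2κ ≤ λ ≤ 0. Then the cubic equation −P·y³ + (P/√2)·y² − |λ+κ|·y + κ/√2 = 0 has exactly one positive real root; moreover this is its only real root (the cubic has no root y ≤ 0). -/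
lemma ou_cubic_aux_nonpos (P a κ c : ℝ) (hP : 0 < P) (ha0 : 0 ≤ a) (hc0 : 0 < c) :
    ∃ b : ℝ, c ≤ b ∧ -P * b ^ 3 + P * c * b ^ 2 - a * b + κ * c ≤ 0 := by
  obtain ⟨t, ht1, ht2'⟩ : ∃ t : ℝ, 1 ≤ t ∧ κ * c ≤ P * t := by
    refine ⟨max 1 (κ * c / P), le_max_left _ _, ?_⟩
    linarith [(div_le_iff₀ hP).mp (le_max_right 1 (κ * c / P))]
  have ht0 : (0:ℝ) < t := lt_of_lt_of_le one_pos ht1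
  refine ⟨c + t, by linarith, ?_⟩
  have h1 : P * t ^ 2 * t ≤ P * (c + t) ^ 2 * t := by
    nlinarith [mul_nonneg (mul_nonneg hP.le (mul_nonneg hc0.le
      (by linarith : (0:ℝ) ≤ c + t + t))) ht0.le]
  have h2 : P * t ≤ P * t ^ 2 * t := by
    nlinarith [mul_nonneg (mul_nonneg (mul_nonneg hP.le ht0.le) (sub_nonneg.mpr ht1))
      (by linarith : (0:ℝ) ≤ t + 1)]
  have h3 : -P * (c + t) ^ 3 + P * c * (c + t) ^ 2 = -(P * (c + t) ^ 2 * t) := by ring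
  have h4 : 0 ≤ a * (c + t) := mul_nonneg ha0 (by linarith)
  linarith

/-- For P > 0, κ > 0 and −2κ ≤ λ ≤ 0, the cubic
−P·y³ + (P/√2)·y² − |λ+κ|·y + κ/√2 has exactly one positive real root,
and every real root is positive. -/
theorem ou_cubic_unique_positive_root (P κ lam : ℝ) (hP : 0 < P) (hκ : 0 < κ)
    (hlam₁ : -2 * κ ≤ lam) (hlam₂ : lam ≤ 0) :
    (∃! y : ℝ, 0 < y ∧
      -P * y ^ 3 + (P / Real.sqrt 2) * y ^ 2 - |lam + κ| * y + κ / Real.sqrt 2 = 0) ∧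
    (∀ y : ℝ,
      -P * y ^ 3 + (P / Real.sqrt 2) * y ^ 2 - |lam + κ| * y + κ / Real.sqrt 2 = 0 →
      0 < y) := by
  set a := |lam + κ| with ha
  set c := (Real.sqrt 2)⁻¹ with hcdef
  have hs0 : (0:ℝ) < Real.sqrt 2 := Real.sqrt_pos.mpr (by norm_num)
  have hc0 : 0 < c := inv_pos.mpr hs0
  have hc2 : c ^ 2 = 1 / 2 := by
    rw [hcdef, ← Real.sqrt_inv]
    rw [Real.sq_sqrt (by norm_num : (0:ℝ) ≤ 2⁻¹)]
    norm_num
  have hPc : P / Real.sqrt 2 = P * c := by rw [div_eq_mul_inv]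
  have hκc : κ / Real.sqrt 2 = κ * c := by rw [div_eq_mul_inv]
  have ha0 : 0 ≤ a := abs_nonneg _
  have haκ : a ≤ κ := by
    rw [ha, abs_le]; constructor <;> linarith
  set f : ℝ → ℝ := fun y => -P * y ^ 3 + (P / Real.sqrt 2) * y ^ 2 - a * y + κ / Real.sqrt 2
    with hf
  have hfval : ∀ y, f y = -P * y ^ 3 + P * c * y ^ 2 - a * y + κ * c := by
    intro y; rw [hf]; simp only [hPc, hκc]
  -- positivity for y ≤ 0
  have hneg : ∀ y : ℝ, y ≤ 0 → 0 < f y := by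
    intro y hy
    rw [hfval]
    nlinarith [mul_nonneg (mul_nonneg hP.le hc0.le) (sq_nonneg y), mul_pos hκ hc0,
      mul_nonneg ha0 (neg_nonneg.mpr hy), mul_nonneg (mul_nonneg hP.le (sq_nonneg y)) (neg_nonneg.mpr hy)]
  -- positivity for 0 < y < c
  have hsmall : ∀ y : ℝ, 0 < y → y < c → 0 < f y := by
    intro y hy hyc
    rw [hfval]
    nlinarith [mul_nonneg (mul_nonneg hP.le (sq_nonneg y)) (sub_nonneg.mpr hyc.le),
      mul_le_mul_of_nonneg_right haκ hy.le, mul_lt_mul_of_pos_left hyc hκ]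
  -- uniqueness on [c, ∞)
  have huniq : ∀ y₁ y₂ : ℝ, c ≤ y₁ → c ≤ y₂ → f y₁ = 0 → f y₂ = 0 → y₁ = y₂ := by
    intro y₁ y₂ h1 h2 e1 e2
    have hy1 : 0 < y₁ := lt_of_lt_of_le hc0 h1
    have hy2 : 0 < y₂ := lt_of_lt_of_le hc0 h2
    set D := P * (y₁ ^ 2 + y₁ * y₂ + y₂ ^ 2) - P * c * (y₁ + y₂) + a with hD
    have hDpos : 0 < D := by
      have h1' : c * y₁ ≤ y₁ ^ 2 := by nlinarith
      have h2' : c * y₂ ≤ y₂ ^ 2 := by nlinarith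
      nlinarith [mul_pos (mul_pos hP hy1) hy2]
    have key : (y₁ - y₂) * D = 0 := by
      rw [hfval] at e1 e2
      rw [hD]; ring_nf; ring_nf at e1 e2; linear_combination e2 - e1
    rcases mul_eq_zero.mp key with h | h
    · linarith
    · exact absurd h (ne_of_gt hDpos)
  -- value at c is nonneg
  have hfc : 0 ≤ f c := by
    rw [hfval]
    nlinarith [mul_nonneg (sub_nonneg.mpr haκ) hc0.le]
  -- large value is nonpos
  obtain ⟨b, hcb, hfb'⟩ := ou_cubic_aux_nonpos P a κ c hP ha0 hc0
  have hfb : f b ≤ 0 := by rw [hfval]; exact hfb'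
  -- existence via IVT
  have hcont : ContinuousOn f (Set.Icc c b) := by
    apply Continuous.continuousOn; rw [hf]; fun_prop
  have hIVT := intermediate_value_Icc' hcb hcont
  have hmem : (0:ℝ) ∈ Set.Icc (f b) (f c) := ⟨hfb, hfc⟩
  obtain ⟨y₀, hy₀mem, hy₀⟩ := hIVT hmem
  have hy₀c : c ≤ y₀ := hy₀mem.1
  have hy₀pos : 0 < y₀ := lt_of_lt_of_le hc0 hy₀c
  -- assemble
  have hallroots : ∀ y : ℝ, f y = 0 → 0 < y := by
    intro y hy
    by_contra h
    push_neg at h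
    exact absurd hy (ne_of_gt (hneg y h))
  have hgec : ∀ y : ℝ, f y = 0 → c ≤ y := by
    intro y hy
    by_contra h
    push_neg at h
    exact absurd hy (ne_of_gt (hsmall y (hallroots y hy) h))
  refine ⟨⟨y₀, ⟨hy₀pos, hy₀⟩, ?_⟩, hallroots⟩
  rintro z ⟨hz0, hz⟩
  exact huniq z y₀ (hgec z hz) hy₀c hz hy₀
end

section
/- Let P > 0, κ > 0 and λ ∈ ℝ with −2κ < λ < 0. Then there exists exactly one x > 0 satisfying P·(x+κ)² = 2x·(x+|κ+λ|)². -/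
set_option maxHeartbeats 1000000


/-- For P > 0, κ > 0 and −2κ < λ < 0, there is exactly one x > 0 with
P·(x+κ)² = 2x·(x+|κ+λ|)². -/
theorem capacity_polynomial_unique_positive_root (P κ lam : ℝ) (hP : 0 < P) (hκ : 0 < κ)
    (hlam₁ : -2 * κ < lam) (hlam₂ : lam < 0) :
    ∃! x : ℝ, 0 < x ∧ P * (x + κ) ^ 2 = 2 * x * (x + |κ + lam|) ^ 2 := by
  set a := |κ + lam| with hadef
  have ha0 : 0 ≤ a := abs_nonneg _
  have hak : a < κ := by
    rw [hadef, abs_lt]; constructor <;> linarith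
  set M : ℝ := κ + 2 * P + 1 with hM
  have hMpos : 0 < M := by positivity
  set f : ℝ → ℝ := fun x => 2 * x * (x + a) ^ 2 - P * (x + κ) ^ 2 with hf
  have hcont : ContinuousOn f (Set.Icc 0 M) := (by fun_prop : Continuous f).continuousOn
  have hf0 : f 0 < 0 := by
    simp only [hf]
    nlinarith [sq_nonneg κ, mul_pos hP (mul_pos hκ hκ)]
  have hfM : 0 < f M := by
    simp only [hf, hM]
    nlinarith [sq_nonneg (κ + 2*P + 1), sq_nonneg a, mul_nonneg ha0 hP.le,
      mul_pos hP hκ, mul_pos hκ hκ, mul_nonneg ha0 hκ.le, sq_nonneg (P - κ)]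
  have hsub := intermediate_value_Icc (le_of_lt hMpos) hcont
  have h0mem : (0 : ℝ) ∈ Set.Icc (f 0) (f M) := ⟨hf0.le, hfM.le⟩
  obtain ⟨x, hxmem, hfx⟩ := hsub h0mem
  have hxpos : 0 < x := by
    rcases lt_or_eq_of_le hxmem.1 with h | h
    · exact h
    · exfalso; rw [← h] at hfx; rw [hfx] at hf0; exact lt_irrefl 0 hf0
  have hxeq : P * (x + κ) ^ 2 = 2 * x * (x + a) ^ 2 := by
    have : 2 * x * (x + a) ^ 2 - P * (x + κ) ^ 2 = 0 := hfx
    linarith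
  refine ⟨x, ⟨hxpos, hxeq⟩, ?_⟩
  rintro y ⟨hy, hyeq⟩
  -- eliminate P
  have hE : y * (y + a) ^ 2 * (x + κ) ^ 2 = x * (x + a) ^ 2 * (y + κ) ^ 2 := by
    have h1 : P * (x + κ) ^ 2 * (y + κ) ^ 2 = 2 * x * (x + a) ^ 2 * (y + κ) ^ 2 := by
      rw [hxeq]
    have h2 : P * (y + κ) ^ 2 * (x + κ) ^ 2 = 2 * y * (y + a) ^ 2 * (x + κ) ^ 2 := by
      rw [hyeq]
    nlinarith [h1, h2]
  have hQpos : 0 < y ^ 2 * (x + κ) ^ 2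
      + y * (2*a*κ^2 + x*κ^2 + 4*a*x*κ - a^2*x + 2*x^2*κ) + κ^2 * (a + x) ^ 2 := by
    have h1 : 0 < y ^ 2 * (x + κ) ^ 2 := by positivity
    have h2 : 0 < κ ^ 2 * (a + x) ^ 2 := by positivity
    have h3 : 0 < 2*a*κ^2 + x*κ^2 + 4*a*x*κ - a^2*x + 2*x^2*κ := by
      have hks : a ^ 2 < κ ^ 2 := by nlinarith
      have t1 : 0 < x * (κ ^ 2 - a ^ 2) := mul_pos hxpos (by linarith)
      have t1' : x * κ ^ 2 - a ^ 2 * x = x * (κ ^ 2 - a ^ 2) := by ring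
      have t2 : (0:ℝ) ≤ 2 * a * κ ^ 2 := by positivity
      have t3 : (0:ℝ) ≤ 4 * a * x * κ := by positivity
      have t4 : (0:ℝ) < 2 * x ^ 2 * κ := by positivity
      linarith
    exact add_pos (add_pos h1 (mul_pos hy h3)) h2
  have hfac : (y - x) * (y ^ 2 * (x + κ) ^ 2
      + y * (2*a*κ^2 + x*κ^2 + 4*a*x*κ - a^2*x + 2*x^2*κ) + κ^2 * (a + x) ^ 2) = 0 := by
    linear_combination hE
  have := mul_eq_zero.mp hfac
  rcases this with h | h
  · linarith
  · exact absurd h (ne_of_gt hQpos)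
end

section
/- Let P > 0, κ > 0 and λ ∈ ℝ. For every y > 0, the following are equivalent: (i) −P·y³ + (P/√2)·y² − |λ+κ|·y + κ/√2 = 0; (ii) the number x = P·y² satisfies P·(x+κ)² = 2x·(x+|κ+λ|)². Consequently, y ↦ P·y² is a bijection between the positive roots of the cubic −P·y³ + (P/√2)·y² − |λ+κ|·y + κ/√2 and the positive roots of P·(x+κ)² = 2x·(x+|κ+λ|)². -/
lemma ou_key (P κ a : ℝ) (hP : 0 < P) (hκ : 0 < κ) (ha : 0 ≤ a)
    (y : ℝ) (hy : 0 < y) :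
    (-P * y ^ 3 + (P / Real.sqrt 2) * y ^ 2 - a * y + κ / Real.sqrt 2 = 0) ↔
      P * (P * y ^ 2 + κ) ^ 2 = 2 * (P * y ^ 2) * (P * y ^ 2 + a) ^ 2 := by
  have hs2 : Real.sqrt 2 * Real.sqrt 2 = 2 := Real.mul_self_sqrt (by norm_num)
  have hs2pos : 0 < Real.sqrt 2 := Real.sqrt_pos.mpr (by norm_num)
  have hs2ne : Real.sqrt 2 ≠ 0 := ne_of_gt hs2pos
  have step1 : (-P * y ^ 3 + (P / Real.sqrt 2) * y ^ 2 - a * y + κ / Real.sqrt 2 = 0) ↔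
      P * y ^ 2 + κ = Real.sqrt 2 * (y * (P * y ^ 2 + a)) := by
    constructor
    · intro h
      have h' := congrArg (· * Real.sqrt 2) h
      field_simp at h'
      nlinarith [h', hs2]
    · intro h
      field_simp
      nlinarith [h, hs2]
  have hs2' : Real.sqrt 2 ^ 2 = 2 := Real.sq_sqrt (by norm_num)
  rw [step1]
  have hu : 0 ≤ P * y ^ 2 + κ := by positivity
  have hv : 0 ≤ Real.sqrt 2 * (y * (P * y ^ 2 + a)) := by positivity
  constructor
  · intro h
    rw [h]; linear_combination (P * y^2 * (P*y^2+a)^2) * hs2'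
  · intro h
    have hsq : (P * y ^ 2 + κ) ^ 2 = (Real.sqrt 2 * (y * (P * y ^ 2 + a))) ^ 2 := by
      have hP' := hP.ne'
      have : P * (P * y ^ 2 + κ) ^ 2 = P * (Real.sqrt 2 * (y * (P * y ^ 2 + a))) ^ 2 := by
        rw [h]; linear_combination (-(P) * y^2 * (P*y^2+a)^2) * hs2'
      exact mul_left_cancel₀ hP' this
    exact (pow_left_inj₀ hu hv (by norm_num)).mp hsq

/-- For y > 0, the cubic −P·y³ + (P/√2)·y² − |λ+κ|·y + κ/√2 = 0 holds
iff x = P·y² satisfies P·(x+κ)² = 2x·(x+|κ+λ|)²; consequently y ↦ P·y² is a bijection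
between the positive roots of the cubic and the positive roots of the capacity equation. -/
theorem ou_cubic_capacity_bijection (P κ lam : ℝ) (hP : 0 < P) (hκ : 0 < κ) :
    (∀ y : ℝ, 0 < y →
      ((-P * y ^ 3 + (P / Real.sqrt 2) * y ^ 2 - |lam + κ| * y + κ / Real.sqrt 2 = 0) ↔
        P * (P * y ^ 2 + κ) ^ 2 = 2 * (P * y ^ 2) * (P * y ^ 2 + |κ + lam|) ^ 2)) ∧
    Set.BijOn (fun y : ℝ => P * y ^ 2)
      {y : ℝ | 0 < y ∧
        -P * y ^ 3 + (P / Real.sqrt 2) * y ^ 2 - |lam + κ| * y + κ / Real.sqrt 2 = 0}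
      {x : ℝ | 0 < x ∧ P * (x + κ) ^ 2 = 2 * x * (x + |κ + lam|) ^ 2} := by
  have hab : |κ + lam| = |lam + κ| := by rw [add_comm]
  have key : ∀ y : ℝ, 0 < y →
      ((-P * y ^ 3 + (P / Real.sqrt 2) * y ^ 2 - |lam + κ| * y + κ / Real.sqrt 2 = 0) ↔
        P * (P * y ^ 2 + κ) ^ 2 = 2 * (P * y ^ 2) * (P * y ^ 2 + |κ + lam|) ^ 2) := by
    intro y hy
    rw [hab]
    exact ou_key P κ (|lam + κ|) hP hκ (abs_nonneg _) y hy
  refine ⟨key, ?_, ?_, ?_⟩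
  · rintro y ⟨hy, hcub⟩
    refine ⟨by positivity, (key y hy).mp hcub⟩
  · rintro y1 ⟨hy1, _⟩ y2 ⟨hy2, _⟩ h
    simp only at h
    have := mul_left_cancel₀ hP.ne' h
    exact (pow_left_inj₀ hy1.le hy2.le (by norm_num)).mp this
  · rintro x ⟨hx, hcap⟩
    refine ⟨Real.sqrt (x / P), ⟨?_, ?_⟩, ?_⟩
    · exact Real.sqrt_pos.mpr (div_pos hx hP)
    · have hyx : P * Real.sqrt (x / P) ^ 2 = x := by
        rw [Real.sq_sqrt (le_of_lt (div_pos hx hP))]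
        field_simp
      have hy : 0 < Real.sqrt (x / P) := Real.sqrt_pos.mpr (div_pos hx hP)
      rw [key _ hy, hyx]
      exact hcap
    · simp only
      rw [Real.sq_sqrt (le_of_lt (div_pos hx hP))]
      field_simp
end

section
/- Let P > 0, κ > 0 and λ ∈ ℝ with λ > 0 or λ < −2κ (equivalently |λ+κ| > κ). Then every real root y of the cubic −P·y³ + (P/√2)·y² − |λ+κ|·y + κ/√2 satisfies 0 < y < 1/√2; consequently P·y² < P/2 for every real root y. -/
/-- For P > 0, κ > 0 and λ > 0 or λ < −2κ, every real root y of the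
cubic −P·y³ + (P/√2)·y² − |λ+κ|·y + κ/√2 satisfies 0 < y < 1/√2, hence P·y² < P/2. -/
theorem ou_cubic_roots_below_half (P κ lam : ℝ) (hP : 0 < P) (hκ : 0 < κ)
    (hlam : lam > 0 ∨ lam < -2 * κ) :
    ∀ y : ℝ,
      -P * y ^ 3 + (P / Real.sqrt 2) * y ^ 2 - |lam + κ| * y + κ / Real.sqrt 2 = 0 →
      0 < y ∧ y < 1 / Real.sqrt 2 ∧ P * y ^ 2 < P / 2 := by
  intro y hy
  set s := Real.sqrt 2 with hsdef
  have hs : 0 < s := Real.sqrt_pos.2 (by norm_num)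
  have hs2 : s ^ 2 = 2 := Real.sq_sqrt (by norm_num)
  have hds : ∀ a : ℝ, a / s = a * s / 2 := by
    intro a
    rw [div_eq_div_iff hs.ne' (by norm_num : (2:ℝ) ≠ 0)]
    linear_combination (-a) * hs2
  have habs : κ < |lam + κ| := by
    rcases hlam with h | h
    · rw [abs_of_pos (by linarith)]; linarith
    · rw [abs_of_neg (by linarith)]; linarith
  rw [hds P, hds κ] at hy
  have hy0 : 0 < y := by
    by_contra h
    push_neg at h
    nlinarith [mul_nonneg (mul_nonneg hP.le (sq_nonneg y)) (neg_nonneg.2 h),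
      mul_nonneg (mul_nonneg hP.le hs.le) (sq_nonneg y),
      mul_nonneg (abs_nonneg (lam + κ)) (neg_nonneg.2 h),
      mul_pos hκ hs]
  have hupper : y < 1 / s := by
    rw [hds 1]
    by_contra h
    push_neg at h
    have h' : 0 ≤ y - s / 2 := by linarith
    nlinarith [mul_nonneg (mul_nonneg hP.le (sq_nonneg y)) h',
      mul_nonneg (abs_nonneg (lam + κ)) h',
      mul_pos (sub_pos.2 habs) hs]
  refine ⟨hy0, hupper, ?_⟩
  rw [hds 1] at hupper
  have h4 : 0 < s / 2 - y := by linarith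
  have h5 : 0 < s / 2 + y := by linarith
  have hy2 : y ^ 2 < 1 / 2 := by nlinarith [mul_pos h4 h5, hs2]
  nlinarith [mul_lt_mul_of_pos_left hy2 hP]
end

section
/- Let P > 0, κ > 0 and λ ∈ ℝ with −2κ < λ < 0. Then the unique positive root x₀ of P·(x+κ)² = 2x·(x+|κ+λ|)² satisfies x₀ > P/2. (Thus the feedback capacity of the OU-Colored AWGN channel with −2κ < λ < 0 strictly exceeds the capacity P/2 of the white Gaussian channel: 'coloring' may increase capacity.) -/
/-- For P > 0, κ > 0 and −2κ < λ < 0, any positive root x₀ of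
P·(x+κ)² = 2x·(x+|κ+λ|)² (in particular the unique one) satisfies x₀ > P/2:
feedback capacity strictly exceeds P/2. -/
theorem capacity_exceeds_white_capacity (P κ lam : ℝ) (hP : 0 < P) (hκ : 0 < κ)
    (hlam₁ : -2 * κ < lam) (hlam₂ : lam < 0) :
    ∀ x₀ : ℝ, 0 < x₀ → P * (x₀ + κ) ^ 2 = 2 * x₀ * (x₀ + |κ + lam|) ^ 2 →
      x₀ > P / 2 := by
  intro x₀ hx heq
  have ha0 : 0 ≤ |κ + lam| := abs_nonneg _
  have ha : |κ + lam| < κ := by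
    rw [abs_lt]; constructor <;> linarith
  set a := |κ + lam| with hadef
  have key : P * (x₀ + a) ^ 2 < P * (x₀ + κ) ^ 2 := by
    have h1 : 0 < (κ - a) * (2 * x₀ + κ + a) := by
      apply mul_pos <;> linarith
    nlinarith [mul_pos hP h1]
  have hsq : 0 < (x₀ + a) ^ 2 := by positivity
  nlinarith
end

section
/- Let κ > 0, λ ∈ ℝ and δ > 0. Set d_k = ∫_{kδ}^{(k+1)δ} e^{−κs} ds for k ≥ 0 and m(δ) = √(2κδ/(1−e^{−2κδ})). For any real sequence (b_k)_{k≥0} and any real number ζ, define z_k = b_k + λ·d_k·( m(δ)·ζ + Σ_{i=0}^{k−1} e^{κ(i+1)δ}·b_i ) for k ≥ 0 (with the empty sum equal to 0 when k = 0). Then for every k ≥ 0: z_{k+1} = e^{−κδ}·z_k + b_{k+1} + ( λ/κ − (λ/κ + 1)·e^{−κδ} )·b_k. -/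
lemma exp_integral_aux (c a b : ℝ) (hc : c ≠ 0) :
    (∫ s in a..b, Real.exp (c * s)) = (Real.exp (c*b) - Real.exp (c*a)) / c := by
  have := intervalIntegral.integral_comp_mul_left (f := fun x => Real.exp x) (a := a) (b := b) hc
  simp [integral_exp] at this
  rw [this]; ring

/-- The discrete-time approximation z_k of the OU-colored noise
satisfies the exact ARMA(1,1) recursion
z_{k+1} = e^{−κδ}·z_k + b_{k+1} + (λ/κ − (λ/κ+1)e^{−κδ})·b_k. -/
theorem arma_recursion_of_ou_approximation (κ lam δ : ℝ) (hκ : 0 < κ) (hδ : 0 < δ)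
    (d : ℕ → ℝ)
    (hd : ∀ k : ℕ, d k = ∫ s in ((k : ℝ) * δ)..(((k : ℝ) + 1) * δ), Real.exp (-κ * s))
    (m : ℝ) (hm : m = Real.sqrt (2 * κ * δ / (1 - Real.exp (-2 * κ * δ))))
    (b : ℕ → ℝ) (ζ : ℝ) (z : ℕ → ℝ)
    (hz : ∀ k : ℕ, z k = b k + lam * d k *
      (m * ζ + ∑ i ∈ Finset.range k, Real.exp (κ * ((i : ℝ) + 1) * δ) * b i)) :
    ∀ k : ℕ, z (k + 1) = Real.exp (-κ * δ) * z k + b (k + 1) +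
      (lam / κ - (lam / κ + 1) * Real.exp (-κ * δ)) * b k := by
  intro k
  have hκ' : κ ≠ 0 := ne_of_gt hκ
  have hc : (-κ : ℝ) ≠ 0 := neg_ne_zero.mpr hκ'
  rw [hz (k+1), hz k, hd (k+1), hd k, Finset.sum_range_succ,
    exp_integral_aux _ _ _ hc, exp_integral_aux _ _ _ hc]
  push_cast
  have r2 : Real.exp (-κ*(((k:ℝ)+1)*δ)) = Real.exp (-κ*((k:ℝ)*δ)) * Real.exp (-κ*δ) := by
    rw [← Real.exp_add]; congr 1; ring
  have r3 : Real.exp (-κ*(((k:ℝ)+1+1)*δ)) = Real.exp (-κ*((k:ℝ)*δ)) * Real.exp (-κ*δ) * Real.exp (-κ*δ) := by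
    rw [← Real.exp_add, ← Real.exp_add]; congr 1; ring
  have r4 : Real.exp (κ*((k:ℝ)+1)*δ) = (Real.exp (-κ*((k:ℝ)*δ)) * Real.exp (-κ*δ))⁻¹ := by
    rw [← Real.exp_add, ← Real.exp_neg]; congr 1; ring
  rw [r2, r3, r4]
  have hA := Real.exp_ne_zero (-κ*((k:ℝ)*δ))
  have hE := Real.exp_ne_zero (-κ*δ)
  field_simp
  ring
end

section
/- Let κ > 0, λ ∈ ℝ and δ > 0alt, and let (Ω, 𝔽, 𝐏) be a probability space carrying square-integrable real random variables (b_i)_{i≥0} and ζ such that 𝐄[b_i·b_j] = δ if i = j and 0 if i ≠ j, 𝐄[ζ²] = 1/(2κ), and 𝐄[ζ·b_i] = 0 for all i. Set d_k = ∫_{kδ}^{(k+1)δ} e^{−κs} ds, m(δ) = √(2κδ/(1−e^{−2κδ})), and z_k = b_k + λ·d_k·( m(δ)·ζ + Σ_{i=0}^{k−1} e^{κ(i+1)δ}·b_i ). Then the process (z_k) is weakly stationary: for all j, m ≥ 0, 𝐄[z_j · z_{j+m}] = 𝐄[z_0 · z_m]; in particular 𝐄[z_k²] does not depend on k. -/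
open MeasureTheory

private lemma l2_mul_integrable {Ω : Type*} [MeasurableSpace Ω] {μ : Measure Ω} {f g : Ω → ℝ}
    (hf : MemLp f 2 μ) (hg : MemLp g 2 μ) : Integrable (fun ω => f ω * g ω) μ := by
  have h : MemLp (g • f) 1 μ := hf.smul hg
  have := memLp_one_iff_integrable.mp h
  exact this.congr (ae_of_all _ fun ω => show g ω * f ω = f ω * g ω from mul_comm _ _)

/-- Orthogonal expansion: the covariance of two finite linear combinations of an
orthogonal family is the diagonal sum. -/
private lemma ortho_expansion {Ω : Type*} [MeasurableSpace Ω] (μ : Measure Ω)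
    (w : ℕ → Ω → ℝ) (v : ℕ → ℝ) (hw : ∀ i, MemLp (w i) 2 μ)
    (hww : ∀ i j, ∫ ω, w i ω * w j ω ∂μ = if i = j then v i else 0)
    (N : ℕ) (f g : ℕ → ℝ) :
    ∫ ω, (∑ i ∈ Finset.range N, f i * w i ω) * (∑ i ∈ Finset.range N, g i * w i ω) ∂μ
      = ∑ i ∈ Finset.range N, f i * g i * v i := by
  have hint : ∀ i j : ℕ, Integrable (fun ω => w i ω * w j ω) μ :=
    fun i j => l2_mul_integrable (hw i) (hw j)
  have hexp : (fun ω => (∑ i ∈ Finset.range N, f i * w i ω) * (∑ i ∈ Finset.range N, g i * w i ω))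
      = fun ω => ∑ i ∈ Finset.range N, ∑ j ∈ Finset.range N, f i * g j * (w i ω * w j ω) := by
    funext ω
    rw [Finset.sum_mul_sum]
    exact Finset.sum_congr rfl fun i _ => Finset.sum_congr rfl fun j _ => by ring
  rw [hexp]
  rw [integral_finset_sum _ (fun i _ => by
    apply integrable_finset_sum
    intro j _
    exact ((hint i j).const_mul _))]
  have : ∀ i ∈ Finset.range N,
      ∫ ω, ∑ j ∈ Finset.range N, f i * g j * (w i ω * w j ω) ∂μ = f i * g i * v i := by
    intro i hi
    rw [integral_finset_sum _ (fun j _ => (hint i j).const_mul _)]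
    have h1 : ∀ j ∈ Finset.range N,
        ∫ ω, f i * g j * (w i ω * w j ω) ∂μ = f i * g j * (if i = j then v i else 0) := by
      intro j _
      rw [integral_const_mul, hww i j]
    rw [Finset.sum_congr rfl h1]
    simp only [mul_ite, mul_zero]
    rw [Finset.sum_ite_eq (Finset.range N) i (fun j => f i * g j * v i)]
    simp [hi]
  exact Finset.sum_congr rfl this

/-- With orthogonal square-integrable increments b_i of variance δ,
an initial state ζ of variance 1/(2κ) orthogonal to all b_i, and the stationarity
correction m(δ) = √(2κδ/(1−e^{−2κδ})), the modified discrete OU-colored noise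
z_k = b_k + λ·d_k·(m(δ)ζ + Σ_{i<k} e^{κ(i+1)δ} b_i) is weakly stationary:
𝐄[z_j z_{j+m}] = 𝐄[z_0 z_m] for all j, m. -/
theorem ou_approximation_weakly_stationary {Ω : Type*} [MeasurableSpace Ω]
    (μ : Measure Ω) [IsProbabilityMeasure μ]
    (κ lam δ : ℝ) (hκ : 0 < κ) (hδ : 0 < δ)
    (b : ℕ → Ω → ℝ) (ζ : Ω → ℝ)
    (hb : ∀ i, MemLp (b i) 2 μ) (hζ : MemLp ζ 2 μ)
    (hbb : ∀ i j, ∫ ω, b i ω * b j ω ∂μ = if i = j then δ else 0)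
    (hζζ : ∫ ω, ζ ω * ζ ω ∂μ = 1 / (2 * κ))
    (hζb : ∀ i, ∫ ω, ζ ω * b i ω ∂μ = 0)
    (d : ℕ → ℝ)
    (hd : ∀ k : ℕ, d k = ∫ s in ((k : ℝ) * δ)..(((k : ℝ) + 1) * δ), Real.exp (-κ * s))
    (m : ℝ) (hm : m = Real.sqrt (2 * κ * δ / (1 - Real.exp (-2 * κ * δ))))
    (z : ℕ → Ω → ℝ)
    (hz : ∀ k ω, z k ω = b k ω + lam * d k *
      (m * ζ ω + ∑ i ∈ Finset.range k, Real.exp (κ * ((i : ℝ) + 1) * δ) * b i ω)) :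
    ∀ j m' : ℕ, ∫ ω, z j ω * z (j + m') ω ∂μ = ∫ ω, z 0 ω * z m' ω ∂μ := by
  -- basic positivity facts about E = exp(κδ)
  set E : ℝ := Real.exp (κ * δ) with hE
  have hE1 : 1 < E := by
    rw [hE]; exact Real.one_lt_exp_iff.mpr (by positivity)
  have hE0 : (0:ℝ) < E := lt_trans one_pos hE1
  have hEne : E ≠ 0 := ne_of_gt hE0
  have hE2gt : 1 < E^2 := one_lt_pow₀ hE1 two_ne_zero
  have hE2ne : E^2 - 1 ≠ 0 := by nlinarith
  have hEpow : ∀ n : ℕ, Real.exp (-κ * ((n:ℝ) * δ)) = (E⁻¹)^n := by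
    intro n
    rw [inv_pow, hE, ← Real.exp_nat_mul, ← Real.exp_neg]
    congr 1; ring
  -- value of d
  have hdk : ∀ k : ℕ, d k = (E⁻¹)^k * ((1 - E⁻¹)/κ) := by
    intro k
    have hint : ∀ a c : ℝ, ∫ s in a..c, Real.exp (-κ * s)
        = (Real.exp (-κ*a) - Real.exp (-κ*c))/κ := by
      intro a c
      have h : ∀ x : ℝ, HasDerivAt (fun s => -(Real.exp (-κ*s)/κ)) (Real.exp (-κ*x)) x := by
        intro x
        have h1 : HasDerivAt (fun s : ℝ => -κ*s) (-κ) x := by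
          simpa using (hasDerivAt_id x).const_mul (-κ)
        have h2 := (h1.exp.div_const κ).neg
        have h3 : -(Real.exp (-κ * x) * -κ / κ) = Real.exp (-κ * x) := by
          rw [mul_neg, neg_div, neg_neg, mul_div_cancel_right₀ _ (ne_of_gt hκ)]
        rw [h3] at h2
        exact h2
      rw [intervalIntegral.integral_eq_sub_of_hasDerivAt (fun x _ => h x)
        ((Real.continuous_exp.comp (continuous_const.mul continuous_id)).intervalIntegrable _ _)]
      ring
    rw [hd k, hint]
    have e1 : Real.exp (-κ * ((k:ℝ) * δ)) = (E⁻¹)^k := hEpow k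
    have e2 : Real.exp (-κ * (((k:ℝ) + 1) * δ)) = (E⁻¹)^(k+1) := by
      have harg : -κ * (((k:ℝ) + 1) * δ) = -κ * ((((k+1:ℕ)):ℝ) * δ) := by push_cast; ring
      rw [harg, hEpow (k+1)]
    rw [e1, e2]
    ring
  -- value of m² / (2κ)
  have hm2 : m^2 = 2 * κ * δ / (1 - Real.exp (-2 * κ * δ)) := by
    rw [hm]
    apply Real.sq_sqrt
    have : Real.exp (-2 * κ * δ) < 1 := Real.exp_lt_one_iff.mpr (by nlinarith)
    have h1 : 0 < 1 - Real.exp (-2 * κ * δ) := by linarith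
    positivity
  have hexp2 : Real.exp (-2 * κ * δ) = (E^2)⁻¹ := by
    have hE2 : E^2 = Real.exp (2*(κ*δ)) := by
      rw [hE, ← Real.exp_nat_mul]; norm_num
    rw [hE2, ← Real.exp_neg]
    congr 1; ring
  have hV : m^2 / (2*κ) * (E^2 - 1) = δ * E^2 := by
    rw [hm2, hexp2]
    have h1 : 1 - (E^2)⁻¹ = (E^2 - 1) / E^2 := by field_simp
    rw [h1]
    field_simp
  -- geometric accumulation identity
  have hB : ∀ p : ℕ, m^2/(2*κ) + δ * ∑ i ∈ Finset.range p, (E^(i+1))^2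
      = E^(2*p) * (m^2/(2*κ)) := by
    intro p
    induction p with
    | zero => simp
    | succ p ih =>
      rw [Finset.sum_range_succ, mul_add, ← add_assoc, ih]
      have hpow : E^(2*(p+1)) = E^(2*p) * E^2 := by ring
      have hpow2 : (E^(p+1))^2 = E^(2*p) * E^2 := by ring
      rw [hpow, hpow2]
      nlinarith [hV, pow_pos hE0 (2*p)]
  -- the orthogonal family
  set w : ℕ → Ω → ℝ := fun i => Nat.casesOn i ζ b with hwdef
  set v : ℕ → ℝ := fun i => Nat.casesOn i (1/(2*κ)) (fun _ => δ) with hvdef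
  have hw : ∀ i, MemLp (w i) 2 μ := by rintro (_|i); exacts [hζ, hb i]
  have hww : ∀ i j, ∫ ω, w i ω * w j ω ∂μ = if i = j then v i else 0 := by
    rintro (_|i) (_|j)
    · show ∫ ω, ζ ω * ζ ω ∂μ = if (0:ℕ) = 0 then 1/(2*κ) else 0
      rw [if_pos rfl]; exact hζζ
    · show ∫ ω, ζ ω * b j ω ∂μ = if (0:ℕ) = j+1 then 1/(2*κ) else 0
      rw [if_neg (by omega)]; exact hζb j
    · show ∫ ω, b i ω * ζ ω ∂μ = if i+1 = 0 then δ else 0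
      rw [if_neg (by omega)]
      have hcomm : (fun ω => b i ω * ζ ω) = fun ω => ζ ω * b i ω := by
        funext ω; ring
      rw [hcomm, hζb i]
    · show ∫ ω, b i ω * b j ω ∂μ = if i+1 = j+1 then δ else 0
      rw [hbb i j]
      by_cases h : i = j
      · rw [if_pos h, if_pos (by omega)]
      · rw [if_neg h, if_neg (by omega)]
  -- the coefficients
  set F : ℕ → ℕ → ℝ := fun k i => Nat.casesOn i (lam * d k * m)
    (fun i => if i < k then lam * d k * E^(i+1) else if i = k then 1 else 0) with hFdef
  -- representation of z
  have hrepr : ∀ k n : ℕ, k < n → ∀ ω, z k ω = ∑ i ∈ Finset.range (n+1), F k i * w i ω := by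
    intro k n hkn ω
    rw [Finset.sum_range_succ']
    have htail : ∑ i ∈ Finset.range n, F k (i+1) * w (i+1) ω
        = (∑ i ∈ Finset.range k, lam * d k * E^(i+1) * b i ω) + b k ω := by
      have hsub : ∑ i ∈ Finset.range n, F k (i+1) * w (i+1) ω
          = ∑ i ∈ Finset.range (k+1), F k (i+1) * w (i+1) ω := by
        refine (Finset.sum_subset (Finset.range_subset_range.mpr hkn) ?_).symm
        intro x hx hx'
        simp only [Finset.mem_range] at hx hx'
        have h1 : ¬ x < k := by omega
        have h2 : x ≠ k := by omega
        show (if x < k then lam * d k * E^(x+1) else if x = k then 1 else 0) * b x ω = 0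
        rw [if_neg h1, if_neg h2, zero_mul]
      rw [hsub, Finset.sum_range_succ]
      have hlast : F k (k+1) * w (k+1) ω = b k ω := by
        show (if k < k then lam * d k * E^(k+1) else if k = k then 1 else 0) * b k ω = b k ω
        simp
      rw [hlast]
      congr 1
      refine Finset.sum_congr rfl fun i hi => ?_
      simp only [Finset.mem_range] at hi
      show (if i < k then lam * d k * E^(i+1) else if i = k then 1 else 0) * b i ω
          = lam * d k * E^(i+1) * b i ω
      rw [if_pos hi]
    rw [htail, hz k ω]
    show b k ω + lam * d k * (m * ζ ω + ∑ i ∈ Finset.range k,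
        Real.exp (κ * ((i : ℝ) + 1) * δ) * b i ω)
      = ((∑ i ∈ Finset.range k, lam * d k * E^(i+1) * b i ω) + b k ω) + lam * d k * m * ζ ω
    have hei : ∀ i : ℕ, Real.exp (κ * ((i : ℝ) + 1) * δ) = E^(i+1) := by
      intro i
      rw [hE, ← Real.exp_nat_mul]
      congr 1; push_cast; ring
    simp only [hei]
    rw [mul_add, Finset.mul_sum]
    have : ∀ i ∈ Finset.range k, lam * d k * (E^(i+1) * b i ω)
        = lam * d k * E^(i+1) * b i ω := fun i _ => by ring
    rw [Finset.sum_congr rfl this]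
    ring
  -- covariance formula
  have hcov : ∀ p q n : ℕ, p < n → q < n →
      ∫ ω, z p ω * z q ω ∂μ = ∑ i ∈ Finset.range (n+1), F p i * F q i * v i := by
    intro p q n hp hq
    have heq : (fun ω => z p ω * z q ω)
        = fun ω => (∑ i ∈ Finset.range (n+1), F p i * w i ω)
            * (∑ i ∈ Finset.range (n+1), F q i * w i ω) := by
      funext ω
      rw [hrepr p n hp ω, hrepr q n hq ω]
    rw [heq]
    exact ortho_expansion μ w v hw hww (n+1) (F p) (F q)
  -- closed form of the covariance sum
  have hclosed : ∀ p q n : ℕ, p ≤ q → q < n →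
      ∑ i ∈ Finset.range (n+1), F p i * F q i * v i
        = lam^2 * d p * d q * (E^(2*p) * (m^2/(2*κ)))
          + δ * (if p = q then 1 else lam * d q * E^(p+1)) := by
    intro p q n hpq hq
    rw [Finset.sum_range_succ']
    have h0 : F p 0 * F q 0 * v 0 = lam^2 * d p * d q * (m^2/(2*κ)) := by
      show (lam * d p * m) * (lam * d q * m) * (1/(2*κ)) = _
      ring
    have hv1 : ∀ i : ℕ, v (i+1) = δ := fun i => rfl
    have htail : ∑ i ∈ Finset.range n, F p (i+1) * F q (i+1) * v (i+1)
        = δ * (lam^2 * d p * d q * ∑ i ∈ Finset.range p, (E^(i+1))^2)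
          + δ * (if p = q then 1 else lam * d q * E^(p+1)) := by
      have hsub : ∑ i ∈ Finset.range n, F p (i+1) * F q (i+1) * v (i+1)
          = ∑ i ∈ Finset.range (p+1), F p (i+1) * F q (i+1) * v (i+1) := by
        refine (Finset.sum_subset (Finset.range_subset_range.mpr (by omega)) ?_).symm
        intro x hx hx'
        simp only [Finset.mem_range] at hx hx'
        have h1 : ¬ x < p := by omega
        have h2 : x ≠ p := by omega
        show (if x < p then lam * d p * E^(x+1) else if x = p then 1 else 0)
            * F q (x+1) * v (x+1) = 0
        rw [if_neg h1, if_neg h2, zero_mul, zero_mul]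
      rw [hsub, Finset.sum_range_succ]
      have hlastF : F p (p+1) = 1 := by
        show (if p < p then lam * d p * E^(p+1) else if p = p then 1 else 0) = 1
        simp
      have hlastG : F q (p+1) = if p = q then 1 else lam * d q * E^(p+1) := by
        show (if p < q then lam * d q * E^(p+1) else if p = q then 1 else 0) = _
        rcases lt_or_eq_of_le hpq with h | h
        · rw [if_pos h, if_neg (by omega)]
        · rw [if_neg (by omega), if_pos h, if_pos h]
      rw [hlastF, hlastG, hv1 p, one_mul]
      have hrest : ∑ i ∈ Finset.range p, F p (i+1) * F q (i+1) * v (i+1)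
          = δ * (lam^2 * d p * d q * ∑ i ∈ Finset.range p, (E^(i+1))^2) := by
        rw [Finset.mul_sum, Finset.mul_sum]
        refine Finset.sum_congr rfl fun i hi => ?_
        simp only [Finset.mem_range] at hi
        have hiq : i < q := lt_of_lt_of_le hi hpq
        show (if i < p then lam * d p * E^(i+1) else if i = p then 1 else 0)
            * (if i < q then lam * d q * E^(i+1) else if i = q then 1 else 0) * v (i+1) = _
        rw [if_pos hi, if_pos hiq, hv1 i]
        ring
      rw [hrest]
      ring
    rw [h0, htail]
    linear_combination (lam^2 * d p * d q) * hB p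
  -- now the main computation
  intro j m'
  rw [hcov j (j + m') (j + m' + 1) (by omega) (by omega),
      hcov 0 m' (j + m' + 1) (by omega) (by omega),
      hclosed j (j+m') (j+m'+1) (by omega) (by omega),
      hclosed 0 m' (j+m'+1) (by omega) (by omega)]
  have h20 : E^(2*0) = 1 := by norm_num
  rcases Nat.eq_zero_or_pos m' with hm0 | hmpos
  · subst hm0
    rw [if_pos (by omega : j = j + 0), if_pos rfl, h20]
    rw [hdk j, hdk (j+0), hdk 0]
    have h1 : (E⁻¹)^j = (E^j)⁻¹ := inv_pow E j
    have h2 : E^(2*j) = E^j * E^j := by rw [two_mul, pow_add]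
    have h3 : (E⁻¹)^(j+0) = (E^j)⁻¹ := by rw [Nat.add_zero]; exact inv_pow E j
    have hGne : E^j ≠ 0 := pow_ne_zero _ hEne
    rw [h1, h2, h3]
    simp only [pow_zero]
    field_simp
  · rw [if_neg (by omega : ¬ j = j + m'), if_neg (by omega : ¬ (0:ℕ) = m'), h20]
    rw [hdk j, hdk (j+m'), hdk 0, hdk m']
    have hGne : E^j ≠ 0 := pow_ne_zero _ hEne
    have h1 : (E⁻¹)^j = (E^j)⁻¹ := inv_pow E j
    have h2 : (E⁻¹)^(j+m') = (E^j)⁻¹ * (E^m')⁻¹ := by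
      rw [inv_pow, pow_add, mul_inv]
    have h3 : (E⁻¹)^m' = (E^m')⁻¹ := inv_pow E m'
    have h4 : E^(2*j) = E^j * E^j := by rw [two_mul, pow_add]
    have h5 : E^(j+1) = E^j * E := by rw [pow_add, pow_one]
    have h6 : E^(0+1) = E := by rw [zero_add, pow_one]
    rw [h1, h2, h3, h4, h5, h6]
    simp only [pow_zero]
    have hMne : E^m' ≠ 0 := pow_ne_zero _ hEne
    field_simp
end

section
/- Let P > 0, κ > 0 and λ ∈ ℝ, and let S(x) = (x² + (κ+λ)²)/(2π(x² + κ²)) for x ∈ ℝ. For n ∈ ℕ and k > 0 define L(n,k) = (1/(4π))·( ∫_{−n/2−k}^{−k} log(1 + (P/n)/S(x)) dx + ∫_{k}^{k+n/2} log(1 + (P/n)/S(x)) dx ). Then for each fixed n, lim_{k→∞} L(n,k) = (n/(4π))·log(1 + 2πP/n), and consequently lim_{n→∞} lim_{k→∞} L(n,k) = P/2. -/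
open Filter MeasureTheory intervalIntegral Real

/-- If `f` is continuous on `[1, ∞)` and tends to `C` at `+∞`, then the integral
of `f` over `[k, k+a]` tends to `a * C` as `k → ∞`. -/
lemma aux_tendsto_integral_shift {f : ℝ → ℝ} {C a : ℝ} (ha : 0 ≤ a)
    (hf : ContinuousOn f (Set.Ici 1))
    (hlim : Filter.Tendsto f Filter.atTop (nhds C)) :
    Filter.Tendsto (fun k : ℝ => ∫ x in k..(k + a), f x) Filter.atTop (nhds (a * C)) := by
  rcases eq_or_lt_of_le ha with h0 | ha
  · simp only [← h0, add_zero, intervalIntegral.integral_same, zero_mul]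
    exact tendsto_const_nhds
  rw [Metric.tendsto_atTop]
  intro ε hε
  have hε2a : 0 < ε / (2 * a) := by positivity
  obtain ⟨K, hK⟩ := (Metric.tendsto_atTop.mp hlim) (ε / (2 * a)) hε2a
  refine ⟨max K 1, fun k hk => ?_⟩
  have hk1 : (1 : ℝ) ≤ k := le_trans (le_max_right K 1) hk
  have hkK : K ≤ k := le_trans (le_max_left K 1) hk
  have hsub : Set.uIcc k (k + a) ⊆ Set.Ici 1 := by
    rw [Set.uIcc_of_le (by linarith)]
    intro x hx
    exact le_trans hk1 hx.1
  have hint : IntervalIntegrable f volume k (k + a) :=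
    (hf.mono hsub).intervalIntegrable
  have hintC : IntervalIntegrable (fun _ : ℝ => C) volume k (k + a) :=
    intervalIntegrable_const
  have hCval : (∫ _ in k..(k + a), C) = a * C := by
    simp [mul_comm]
  have hdiff : (∫ x in k..(k + a), f x) - a * C = ∫ x in k..(k + a), (f x - C) := by
    rw [intervalIntegral.integral_sub hint hintC, hCval]
  have hbound : ‖∫ x in k..(k + a), (f x - C)‖ ≤ (ε / (2 * a)) * |k + a - k| := by
    apply intervalIntegral.norm_integral_le_of_norm_le_const
    intro x hx
    rw [Set.uIoc_of_le (by linarith)] at hx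
    have : dist (f x) C < ε / (2 * a) := hK x (le_trans hkK (le_of_lt hx.1))
    rw [Real.dist_eq] at this
    exact le_of_lt this
  rw [Real.dist_eq, hdiff]
  calc |∫ x in k..(k + a), (f x - C)| ≤ (ε / (2 * a)) * |k + a - k| := hbound
    _ = ε / 2 := by
        rw [show k + a - k = a by ring, abs_of_pos ha]
        field_simp
    _ < ε := by linarith

/-- With S(x) = (x²+(κ+λ)²)/(2π(x²+κ²)) and
L(n,k) = (1/(4π))(∫_{−n/2−k}^{−k} log(1+(P/n)/S) + ∫_k^{k+n/2} log(1+(P/n)/S)),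
for each fixed n ≥ 1, L(n,k) → (n/(4π))·log(1+2πP/n) as k → ∞, and
(n/(4π))·log(1+2πP/n) → P/2 as n → ∞. -/
theorem water_filling_lower_bound (P κ lam : ℝ) (hP : 0 < P) (hκ : 0 < κ)
    (S : ℝ → ℝ)
    (hS : ∀ x, S x = (x ^ 2 + (κ + lam) ^ 2) / (2 * Real.pi * (x ^ 2 + κ ^ 2)))
    (L : ℕ → ℝ → ℝ)
    (hL : ∀ n k, L n k = (1 / (4 * Real.pi)) *
      ((∫ x in (-(n : ℝ) / 2 - k)..(-k), Real.log (1 + (P / (n : ℝ)) / S x)) +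
       (∫ x in k..(k + (n : ℝ) / 2), Real.log (1 + (P / (n : ℝ)) / S x)))) :
    (∀ n : ℕ, 0 < n →
      Filter.Tendsto (fun k : ℝ => L n k) Filter.atTop
        (nhds (((n : ℝ) / (4 * Real.pi)) * Real.log (1 + 2 * Real.pi * P / (n : ℝ))))) ∧
    Filter.Tendsto
      (fun n : ℕ => ((n : ℝ) / (4 * Real.pi)) * Real.log (1 + 2 * Real.pi * P / (n : ℝ)))
      Filter.atTop (nhds (P / 2)) := by
  have hπ : 0 < Real.pi := Real.pi_pos
  constructor
  · intro n hn
    have hn' : (0 : ℝ) < n := by exact_mod_cast hn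
    set c : ℝ := P / n with hc
    have hc0 : 0 < c := by positivity
    set f : ℝ → ℝ := fun x => Real.log (1 + c / S x) with hf
    -- S tends to 1/(2π)
    have hx2 : Filter.Tendsto (fun x : ℝ => x ^ 2) Filter.atTop Filter.atTop :=
      tendsto_pow_atTop (two_ne_zero)
    have hS1 : Filter.Tendsto S Filter.atTop (nhds (1 / (2 * Real.pi))) := by
      have h1 : Filter.Tendsto (fun x : ℝ => 1 + ((κ + lam) ^ 2 - κ ^ 2) / (x ^ 2 + κ ^ 2))
          Filter.atTop (nhds 1) := by
        have : Filter.Tendsto (fun x : ℝ => ((κ + lam) ^ 2 - κ ^ 2) / (x ^ 2 + κ ^ 2))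
            Filter.atTop (nhds 0) :=
          Filter.Tendsto.div_atTop tendsto_const_nhds
            (Filter.tendsto_atTop_add_const_right _ _ hx2)
        simpa using (tendsto_const_nhds.add this)
      have h2 : Filter.Tendsto (fun x : ℝ =>
          (1 + ((κ + lam) ^ 2 - κ ^ 2) / (x ^ 2 + κ ^ 2)) * (1 / (2 * Real.pi)))
          Filter.atTop (nhds (1 * (1 / (2 * Real.pi)))) := h1.mul tendsto_const_nhds
      rw [one_mul] at h2
      apply h2.congr
      intro x
      have hden : x ^ 2 + κ ^ 2 > 0 := by positivity
      rw [hS x]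
      have hden' : (x ^ 2 + κ ^ 2) ≠ 0 := ne_of_gt hden
      have h2π : (2 * Real.pi) ≠ 0 := by positivity
      field_simp
      ring_nf
    have hSne : (1 : ℝ) / (2 * Real.pi) ≠ 0 := by positivity
    have hflim : Filter.Tendsto f Filter.atTop (nhds (Real.log (1 + 2 * Real.pi * P / n))) := by
      have hdiv : Filter.Tendsto (fun x => c / S x) Filter.atTop
          (nhds (c / (1 / (2 * Real.pi)))) :=
        Filter.Tendsto.div tendsto_const_nhds hS1 hSne
      have hval : c / (1 / (2 * Real.pi)) = 2 * Real.pi * P / n := by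
        rw [hc]; field_simp
      rw [hval] at hdiv
      have hpos : (0 : ℝ) < 1 + 2 * Real.pi * P / n := by positivity
      exact Filter.Tendsto.log (tendsto_const_nhds.add hdiv) (ne_of_gt hpos)
    -- continuity of f on [1, ∞)
    have hfc : ContinuousOn f (Set.Ici 1) := by
      have hSpos : ∀ x ∈ Set.Ici (1 : ℝ), 0 < S x := by
        intro x hx
        have hx1 : (1 : ℝ) ≤ x := hx
        have hnum : 0 < x ^ 2 + (κ + lam) ^ 2 := by nlinarith
        have hden : 0 < 2 * Real.pi * (x ^ 2 + κ ^ 2) := by positivity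
        rw [hS x]; positivity
      have hexp : ContinuousOn
          (fun x : ℝ => (x ^ 2 + (κ + lam) ^ 2) / (2 * Real.pi * (x ^ 2 + κ ^ 2)))
          (Set.Ici 1) := by
        apply ContinuousOn.div
        · fun_prop
        · fun_prop
        · intro x hx
          have : (0:ℝ) < x ^ 2 + κ ^ 2 := by positivity
          positivity
      have hScont : ContinuousOn S (Set.Ici 1) :=
        hexp.congr (fun x _ => hS x)
      apply ContinuousOn.log
      · exact continuousOn_const.add (continuousOn_const.div hScont
          (fun x hx => ne_of_gt (hSpos x hx)))
      · intro x hx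
        have := hSpos x hx
        have : 0 < 1 + c / S x := by positivity
        exact ne_of_gt this
    -- limit of the right integral
    have hI : Filter.Tendsto (fun k : ℝ => ∫ x in k..(k + (n : ℝ) / 2), f x)
        Filter.atTop (nhds (((n : ℝ) / 2) * Real.log (1 + 2 * Real.pi * P / n))) :=
      aux_tendsto_integral_shift (by positivity) hfc hflim
    -- symmetry: left integral equals right integral
    have heven : ∀ x : ℝ, f (-x) = f x := by
      intro x; simp only [hf, neg_sq, hS]
    have hsym : ∀ k : ℝ, (∫ x in (-(n : ℝ) / 2 - k)..(-k), f x)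
        = ∫ x in k..(k + (n : ℝ) / 2), f x := by
      intro k
      have h1 : (∫ x in k..(k + (n : ℝ) / 2), f (-x)) = ∫ x in (-(k + (n : ℝ) / 2))..(-k), f x :=
        intervalIntegral.integral_comp_neg f
      have h2 : (-(k + (n : ℝ) / 2)) = -(n : ℝ) / 2 - k := by ring
      rw [h2] at h1
      rw [← h1]
      exact intervalIntegral.integral_congr (fun x _ => heven x)
    -- conclude part 1
    have hLk : ∀ k : ℝ, L n k = (1 / (4 * Real.pi)) * (2 * ∫ x in k..(k + (n : ℝ) / 2), f x) := by
      intro k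
      rw [hL n k, hsym k]
      ring
    have : Filter.Tendsto (fun k : ℝ =>
        (1 / (4 * Real.pi)) * (2 * ∫ x in k..(k + (n : ℝ) / 2), f x)) Filter.atTop
        (nhds ((1 / (4 * Real.pi)) * (2 * (((n : ℝ) / 2) * Real.log (1 + 2 * Real.pi * P / n))))) :=
      (tendsto_const_nhds.mul (tendsto_const_nhds.mul hI))
    have heq : (1 / (4 * Real.pi)) * (2 * (((n : ℝ) / 2) * Real.log (1 + 2 * Real.pi * P / n)))
        = ((n : ℝ) / (4 * Real.pi)) * Real.log (1 + 2 * Real.pi * P / n) := by ring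
    rw [heq] at this
    exact this.congr (fun k => (hLk k).symm)
  · -- part 2
    have h1 : Filter.Tendsto (fun x : ℝ => x * Real.log (1 + (2 * Real.pi * P) / x))
        Filter.atTop (nhds (2 * Real.pi * P)) :=
      Real.tendsto_mul_log_one_add_div_atTop (2 * Real.pi * P)
    have h2 : Filter.Tendsto (fun n : ℕ => ((n : ℝ) * Real.log (1 + (2 * Real.pi * P) / n)))
        Filter.atTop (nhds (2 * Real.pi * P)) :=
      h1.comp tendsto_natCast_atTop_atTop
    have h3 := h2.const_mul (1 / (4 * Real.pi))
    have heq : (1 / (4 * Real.pi)) * (2 * Real.pi * P) = P / 2 := by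
      field_simp; ring
    rw [heq] at h3
    apply h3.congr
    intro n
    ring
end

section
/- Let P > 0, κ > 0 and λ ∈ ℝ with −κ ≤ λ < 0. For δ > 0 define φ(δ) = −e^{−κδ} and θ(δ) = λ/κ − (λ/κ + 1)·e^{−κδ}. Then for every ε > 0 there exists δ₀ > 0 such that for all 0 < δ < δ₀, every x > 0 satisfying P·δ·x²·(1+φ(δ)·x)² = (1 − x²)·(1+θ(δ)·x)² lies in the interval (1−ε, 1). In particular, as δ → 0⁺, the positive roots of this quartic tend to 1. -/
set_option maxHeartbeats 800000

/-- For −κ ≤ λ < 0, with φ(δ) = −e^{−κδ} and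
θ(δ) = λ/κ − (λ/κ+1)e^{−κδ}, for every ε > 0 there is δ₀ > 0 such that for all
0 < δ < δ₀, every positive root x of P·δ·x²·(1+φ(δ)x)² = (1−x²)(1+θ(δ)x)² lies in
(1−ε, 1). -/
theorem yang_kim_roots_tend_to_one (P κ lam : ℝ) (hP : 0 < P) (hκ : 0 < κ)
    (h1 : -κ ≤ lam) (h2 : lam < 0) :
    ∀ ε : ℝ, 0 < ε → ∃ δ₀ : ℝ, 0 < δ₀ ∧ ∀ δ : ℝ, 0 < δ → δ < δ₀ →
      ∀ x : ℝ, 0 < x →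
        P * δ * x ^ 2 * (1 + (-Real.exp (-κ * δ)) * x) ^ 2 =
          (1 - x ^ 2) * (1 + (lam / κ - (lam / κ + 1) * Real.exp (-κ * δ)) * x) ^ 2 →
        1 - ε < x ∧ x < 1 := by
  intro ε hε
  refine ⟨min ε 1 ^ 3 / P, by positivity, ?_⟩
  intro δ hδ hδ0 x hx heq
  set E := Real.exp (-κ * δ) with hEdef
  have hEpos : 0 < E := Real.exp_pos _
  have hE1 : E < 1 := by
    rw [hEdef, Real.exp_lt_one_iff]
    nlinarith
  set L := lam / κ with hLdef
  have hL0 : L < 0 := div_neg_of_neg_of_pos h2 hκ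
  have hLm1 : -1 ≤ L := by
    rw [hLdef, le_div_iff₀ hκ]; linarith
  have hθ1 : 0 ≤ 1 + (L - (L + 1) * E) := by nlinarith
  -- upper bound : x < 1
  have hx1 : x < 1 := by
    by_contra h
    push_neg at h
    have hRnp : (1 - x ^ 2) * (1 + (L - (L + 1) * E) * x) ^ 2 ≤ 0 := by
      nlinarith [mul_nonneg (show (0:ℝ) ≤ x ^ 2 - 1 by nlinarith)
        (sq_nonneg (1 + (L - (L + 1) * E) * x))]
    have hLnn : 0 ≤ P * δ * x ^ 2 * (1 + (-E) * x) ^ 2 := by positivity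
    have hLzero : P * δ * x ^ 2 * (1 + (-E) * x) ^ 2 = 0 := le_antisymm (heq ▸ hRnp) hLnn
    have hsq : (1 + (-E) * x) ^ 2 = 0 := by
      rcases mul_eq_zero.mp hLzero with h' | h'
      · exact absurd h' (by positivity)
      · exact h'
    have hEx : E * x = 1 := by
      have := pow_eq_zero_iff (n := 2) (by norm_num) |>.mp hsq
      linarith
    have hx1' : 1 < x := by nlinarith
    have hRzero : (1 - x ^ 2) * (1 + (L - (L + 1) * E) * x) ^ 2 = 0 := heq ▸ hLzero
    have hsq2 : (1 + (L - (L + 1) * E) * x) ^ 2 = 0 := by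
      rcases mul_eq_zero.mp hRzero with h' | h'
      · nlinarith
      · exact h'
    have h3 : 1 + (L - (L + 1) * E) * x = 0 := by
      exact pow_eq_zero_iff (by norm_num) |>.mp hsq2
    -- 1 + L*x - (L+1)*(E*x) = L*(x-1)
    nlinarith [mul_neg_of_neg_of_pos hL0 (show (0:ℝ) < x - 1 by linarith)]
  refine ⟨?_, hx1⟩
  -- lower bound
  rcases lt_or_ge (1 - min ε 1) x with hlt | hle
  · have : min ε 1 ≤ ε := min_le_left _ _
    linarith
  · exfalso
    set m := min ε 1 with hm
    have hm0 : 0 < m := lt_min hε one_pos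
    have hm1 : m ≤ 1 := min_le_right _ _
    have h1x : m ≤ 1 - x := by linarith
    have hθx : 1 - x ≤ 1 + (L - (L + 1) * E) * x := by nlinarith
    have hRge : m ^ 3 ≤ (1 - x ^ 2) * (1 + (L - (L + 1) * E) * x) ^ 2 := by
      have hA : m ≤ 1 - x ^ 2 := by nlinarith
      have hB : m ^ 2 ≤ (1 + (L - (L + 1) * E) * x) ^ 2 := by nlinarith
      nlinarith
    have hEx1 : E * x < 1 := by nlinarith
    have hLHSlt : P * δ * x ^ 2 * (1 + (-E) * x) ^ 2 < P * δ := by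
      have h1 : 0 < 1 + (-E) * x := by nlinarith
      have h2 : x * (1 + (-E) * x) < 1 := by nlinarith
      have hy : 0 < x * (1 + (-E) * x) := mul_pos hx h1
      have h3 : x ^ 2 * (1 + (-E) * x) ^ 2 < 1 := by nlinarith
      calc P * δ * x ^ 2 * (1 + (-E) * x) ^ 2
          = P * δ * (x ^ 2 * (1 + (-E) * x) ^ 2) := by ring
        _ < P * δ * 1 := by
            have hPδ0 : 0 < P * δ := mul_pos hP hδ
            exact mul_lt_mul_of_pos_left h3 hPδ0
        _ = P * δ := by ring
    have hPδ : P * δ < m ^ 3 := by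
      have := (lt_div_iff₀ hP).mp hδ0
      linarith
    linarith [heq ▸ hRge]
end

section
/- Let P > 0, κ > 0 and λ ∈ ℝ. For δ > 0 define φ(δ) = −e^{−κδ} and θ(δ) = λ/κ − (λ/κ + 1)·e^{−κδ}. Suppose δ₀ > 0 and x : (0,δ₀) → (0,1) is such that for every δ ∈ (0,δ₀), P·δ·x(δ)²·(1+φ(δ)·x(δ))² = (1 − x(δ)²)·(1+θ(δ)·x(δ))², and suppose the limit β = lim_{δ→0⁺} (1 − x(δ))/δ exists in ℝ. Then β satisfies P·(β+κ)² = 2β·(β+κ+λ)². Equivalently, lim_{δ→0⁺} (−log x(δ))/δ = β is a root of the capacity polynomial equation P·(x+κ)² = 2x·(x+κ+λ)². -/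
open Topology Filter

private lemma yk_exp_slope (κ : ℝ) :
    Filter.Tendsto (fun δ : ℝ => (1 - Real.exp (-κ * δ)) / δ) (𝓝[>] (0:ℝ)) (𝓝 κ) := by
  have h : HasDerivAt (fun t : ℝ => Real.exp (-κ * t)) (-κ) 0 := by
    have h0 : HasDerivAt (fun t : ℝ => -κ * t) (-κ) 0 := by
      simpa using (hasDerivAt_id (0:ℝ)).const_mul (-κ)
    simpa using h0.exp
  have hs := (hasDerivAt_iff_tendsto_slope.mp h).mono_left
    (nhdsWithin_mono _ (fun y hy => ne_of_gt hy))
  have hs' : Filter.Tendsto (fun δ : ℝ => (Real.exp (-κ * δ) - 1) / δ)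
      (𝓝[>] (0:ℝ)) (𝓝 (-κ)) := by
    refine hs.congr (fun δ => ?_)
    simp [slope_def_field]
  have := hs'.neg
  simp only [neg_neg] at this
  refine this.congr (fun δ => ?_)
  rw [← neg_div, neg_sub]

private lemma yk_log_slope :
    Filter.Tendsto (fun y : ℝ => -Real.log y / (1 - y)) (𝓝[≠] (1:ℝ)) (𝓝 1) := by
  have h : HasDerivAt Real.log 1 1 := by simpa using Real.hasDerivAt_log one_ne_zero
  have hs := hasDerivAt_iff_tendsto_slope.mp h
  refine hs.congr (fun y => ?_)
  simp only [slope_def_field, Real.log_one, sub_zero]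
  rw [show y - (1:ℝ) = -(1 - y) by ring, div_neg, neg_div]

/-- If x(δ) ∈ (0,1) solves the Yang–Kim quartic
P·δ·x²·(1+φ(δ)x)² = (1−x²)(1+θ(δ)x)² for all δ ∈ (0,δ₀), and
β = lim_{δ→0⁺} (1−x(δ))/δ exists, then P·(β+κ)² = 2β·(β+κ+λ)², and moreover
(−log x(δ))/δ → β as δ → 0⁺. -/
theorem yang_kim_limit_is_capacity_root (P κ lam : ℝ) (hP : 0 < P) (hκ : 0 < κ)
    (δ₀ : ℝ) (hδ₀ : 0 < δ₀) (x : ℝ → ℝ)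
    (hx01 : ∀ δ ∈ Set.Ioo (0:ℝ) δ₀, x δ ∈ Set.Ioo (0:ℝ) 1)
    (hroot : ∀ δ ∈ Set.Ioo (0:ℝ) δ₀,
      P * δ * (x δ) ^ 2 * (1 + (-Real.exp (-κ * δ)) * x δ) ^ 2 =
        (1 - (x δ) ^ 2) *
          (1 + (lam / κ - (lam / κ + 1) * Real.exp (-κ * δ)) * x δ) ^ 2)
    (β : ℝ)
    (hβ : Filter.Tendsto (fun δ => (1 - x δ) / δ) (𝓝[>] (0:ℝ)) (𝓝 β)) :
    P * (β + κ) ^ 2 = 2 * β * (β + κ + lam) ^ 2 ∧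
    Filter.Tendsto (fun δ => -Real.log (x δ) / δ) (𝓝[>] (0:ℝ)) (𝓝 β) := by
  have hmem : ∀ᶠ δ in 𝓝[>] (0:ℝ), δ ∈ Set.Ioo (0:ℝ) δ₀ := by
    filter_upwards [Ioo_mem_nhdsGT_of_mem (Set.left_mem_Ico.mpr hδ₀)] with δ hδ using hδ
  have hδid : Filter.Tendsto (fun δ : ℝ => δ) (𝓝[>] (0:ℝ)) (𝓝 0) :=
    tendsto_id.mono_left nhdsWithin_le_nhds
  -- x δ → 1
  have hx1 : Filter.Tendsto x (𝓝[>] (0:ℝ)) (𝓝 1) := by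
    have h0 : Filter.Tendsto (fun δ => (1 - x δ) / δ * δ) (𝓝[>] (0:ℝ)) (𝓝 (β * 0)) :=
      hβ.mul hδid
    have h1 : Filter.Tendsto (fun δ => 1 - x δ) (𝓝[>] (0:ℝ)) (𝓝 (β * 0)) := by
      refine h0.congr' ?_
      filter_upwards [hmem] with δ hδ
      have hδne : δ ≠ 0 := ne_of_gt hδ.1
      field_simp
    rw [mul_zero] at h1
    have := h1.const_sub 1
    simpa using this
  have hE := yk_exp_slope κ
  have hθ : Filter.Tendsto (fun δ : ℝ => lam / κ - (lam / κ + 1) * Real.exp (-κ * δ))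
      (𝓝[>] (0:ℝ)) (𝓝 (-1)) := by
    have hexp : Filter.Tendsto (fun δ : ℝ => Real.exp (-κ * δ)) (𝓝[>] (0:ℝ)) (𝓝 1) := by
      have hm : Filter.Tendsto (fun δ : ℝ => -κ * δ) (𝓝[>] (0:ℝ)) (𝓝 0) := by
        simpa using hδid.const_mul (-κ)
      have := (Real.continuous_exp.tendsto 0).comp hm
      simpa [Function.comp_def] using this
    have := (tendsto_const_nhds (x := lam / κ)).sub (hexp.const_mul (lam / κ + 1))
    simpa using this.congr (fun δ => by ring)
  -- A/δ → β + κ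
  have hA : Filter.Tendsto (fun δ => (1 + (-Real.exp (-κ * δ)) * x δ) / δ)
      (𝓝[>] (0:ℝ)) (𝓝 (β + κ)) := by
    have h2 := hβ.add (hx1.mul hE)
    rw [show β + κ = β + 1 * κ by ring]
    refine h2.congr' ?_
    filter_upwards [hmem] with δ hδ
    have hδne : δ ≠ 0 := ne_of_gt hδ.1
    field_simp
    ring
  -- B/δ → β + κ + lam
  have hB : Filter.Tendsto
      (fun δ => (1 + (lam / κ - (lam / κ + 1) * Real.exp (-κ * δ)) * x δ) / δ)
      (𝓝[>] (0:ℝ)) (𝓝 (β + κ + lam)) := by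
    have h2 := (hE.const_mul (lam / κ + 1)).sub (hθ.mul hβ)
    rw [show β + κ + lam = (lam / κ + 1) * κ - (-1) * β by field_simp; ring]
    refine h2.congr' ?_
    filter_upwards [hmem] with δ hδ
    have hδne : δ ≠ 0 := ne_of_gt hδ.1
    field_simp
    ring
  -- main equality by uniqueness of limits
  have hFG : ∀ᶠ δ in 𝓝[>] (0:ℝ),
      P * x δ ^ 2 * ((1 + (-Real.exp (-κ * δ)) * x δ) / δ) ^ 2 =
      ((1 - x δ) / δ) * (1 + x δ) *
        ((1 + (lam / κ - (lam / κ + 1) * Real.exp (-κ * δ)) * x δ) / δ) ^ 2 := by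
    filter_upwards [hmem] with δ hδ
    have hδne : δ ≠ 0 := ne_of_gt hδ.1
    have h := hroot δ hδ
    set a := 1 + (-Real.exp (-κ * δ)) * x δ with ha
    set b := 1 + (lam / κ - (lam / κ + 1) * Real.exp (-κ * δ)) * x δ with hb
    field_simp
    linear_combination h
  have hF : Filter.Tendsto
      (fun δ => P * x δ ^ 2 * ((1 + (-Real.exp (-κ * δ)) * x δ) / δ) ^ 2)
      (𝓝[>] (0:ℝ)) (𝓝 (P * 1 ^ 2 * (β + κ) ^ 2)) :=
    ((tendsto_const_nhds.mul (hx1.pow 2)).mul (hA.pow 2))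
  have hG : Filter.Tendsto
      (fun δ => ((1 - x δ) / δ) * (1 + x δ) *
        ((1 + (lam / κ - (lam / κ + 1) * Real.exp (-κ * δ)) * x δ) / δ) ^ 2)
      (𝓝[>] (0:ℝ)) (𝓝 (β * (1 + 1) * (β + κ + lam) ^ 2)) :=
    ((hβ.mul (hx1.const_add 1)).mul (hB.pow 2))
  have heq : P * 1 ^ 2 * (β + κ) ^ 2 = β * (1 + 1) * (β + κ + lam) ^ 2 :=
    tendsto_nhds_unique (hF.congr' hFG) hG
  constructor
  · linarith [heq]
  -- log part
  · have hxne : Filter.Tendsto x (𝓝[>] (0:ℝ)) (𝓝[≠] (1:ℝ)) := by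
      rw [tendsto_nhdsWithin_iff]
      refine ⟨hx1, ?_⟩
      filter_upwards [hmem] with δ hδ
      exact ne_of_lt (hx01 δ hδ).2
    have hcomp := yk_log_slope.comp hxne
    have := hcomp.mul hβ
    rw [show β = 1 * β by ring]
    refine this.congr' ?_
    filter_upwards [hmem] with δ hδ
    have h1 : 1 - x δ ≠ 0 := sub_ne_zero.mpr (ne_of_lt (hx01 δ hδ).2).symm
    have hδne : δ ≠ 0 := ne_of_gt hδ.1
    simp only [Function.comp]
    field_simp
end
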